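/- arXiv:1812.06266 — 2 statements merged into one kernel-verified Lean document; each statement's English description precedes it below -/
import Mathlib

section
/- Let (W,S) be a Coxeter system, w ∈ W, and let D_L(w) = {s ∈ S : ℓ(sw) < ℓ(w)} and D_R(w) = {s ∈ S : ℓ(ws) < ℓ(w)}. For any u ≤ w, x ∈ W_{D_L(w)}, and y ∈ W_{D_R(w)}, we have xuy ≤ w. That is, the double coset W_{D_L(w)} u W_{D_R(w)} is contained in the lower Bruhat interval [e,w]. -/
open CoxeterSystem List

variable {B W : Type*} [Group W] {M : CoxeterMatrix B}

namespace CoxeterBruhat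

/-- One edge in the Bruhat graph: `v = t * u` for a reflection `t`, with `ℓ(u) < ℓ(v)`. -/
def Step (cs : CoxeterSystem M W) (u v : W) : Prop :=
  ∃ t : W, cs.IsReflection t ∧ v = t * u ∧ cs.length u < cs.length v

/-- The Bruhat order, as the reflexive-transitive closure of `Step`. -/
def BruhatLE (cs : CoxeterSystem M W) : W → W → Prop :=
  Relation.ReflTransGen (Step cs)

/-- The standard parabolic subgroup generated by the simple reflections indexed by `I`. -/
def parabolic (cs : CoxeterSystem M W) (I : Set B) : Subgroup W :=
  Subgroup.closure (cs.simple '' I)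

/-- The left descent set `D_L(w)`. -/
def leftDescents (cs : CoxeterSystem M W) (w : W) : Set B :=
  {i | cs.IsLeftDescent w i}

/-- The right descent set `D_R(w)`. -/
def rightDescents (cs : CoxeterSystem M W) (w : W) : Set B :=
  {i | cs.IsRightDescent w i}

/-- The double coset `W_I u W_J` as a set. -/
def doubleCoset (cs : CoxeterSystem M W) (I J : Set B) (u : W) : Set W :=
  {v | ∃ x ∈ parabolic cs I, ∃ y ∈ parabolic cs J, v = x * u * y}

/-- The Bruhat coset `C_w(u) = W_{D_L(w)} u W_{D_R(w)}`. -/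
def bCoset (cs : CoxeterSystem M W) (w u : W) : Set W :=
  doubleCoset cs (leftDescents cs w) (rightDescents cs w) u

/-- The lower Bruhat interval `B(w) = [e, w]`. -/
def lowerInterval (cs : CoxeterSystem M W) (w : W) : Set W :=
  {v | BruhatLE cs v w}

/-- The support `S(v)` of `v`: simple reflections below `v` in Bruhat order. -/
def support (cs : CoxeterSystem M W) (v : W) : Set B :=
  {i | BruhatLE cs (cs.simple i) v}


attribute [local instance] Classical.decEq

variable (cs : CoxeterSystem M W)

/-- underlying function of the parity action of a simple reflection. -/
noncomputable def sigFun (i : B) : W × ZMod 2 → W × ZMod 2 :=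
  fun p => (cs.simple i * p.1 * cs.simple i, p.2 + if p.1 = cs.simple i then 1 else 0)

theorem sigFun_involutive (i : B) : Function.Involutive (sigFun cs i) := by
  rintro ⟨t, ε⟩
  have h1 : cs.simple i * (cs.simple i * t * cs.simple i) * cs.simple i = t := by
    simp [mul_assoc]
  have h2 : (cs.simple i * t * cs.simple i = cs.simple i) ↔ (t = cs.simple i) := by
    constructor
    · intro h
      have := congrArg (fun z => cs.simple i * z * cs.simple i) h
      simpa [mul_assoc] using this
    · rintro rfl; simp
  simp only [sigFun]
  rw [Prod.mk.injEq]
  refine ⟨h1, ?_⟩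
  rcases eq_or_ne t (cs.simple i) with h | h
  · rw [if_pos h]; simp only [h2.mpr h, ↓reduceIte]
    revert ε; decide
  · rw [if_neg h]; simp only [show ¬(cs.simple i * t * cs.simple i = cs.simple i) from fun hh => h (h2.mp hh), ↓reduceIte]
    simp

/-- The parity action of a simple reflection on `W × ZMod 2`. -/
noncomputable def sig (i : B) : Equiv.Perm (W × ZMod 2) := (sigFun_involutive cs i).toPerm

@[simp] theorem sig_apply (i : B) (p : W × ZMod 2) : sig cs i p = sigFun cs i p := rfl

theorem prod_sig_apply (ω : List B) (t : W) (ε : ZMod 2) :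
    ((ω.map (sig cs)).prod) (t, ε) =
      (cs.wordProd ω * t * (cs.wordProd ω)⁻¹, ε + ((cs.rightInvSeq ω).count t : ZMod 2)) := by
  induction ω generalizing ε with
  | nil => simp
  | cons i ω ih =>
    have hris : cs.rightInvSeq (i :: ω) =
        ((cs.wordProd ω)⁻¹ * cs.simple i * cs.wordProd ω) :: cs.rightInvSeq ω := rfl
    rw [map_cons, prod_cons, Equiv.Perm.mul_apply, ih, hris, cs.wordProd_cons]
    have hiff : (cs.wordProd ω * t * (cs.wordProd ω)⁻¹ = cs.simple i) ↔
        ((cs.wordProd ω)⁻¹ * cs.simple i * cs.wordProd ω = t) := by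
      constructor
      · intro h; rw [← h]; group
      · intro h; rw [← h]; group
    rw [List.count_cons]
    simp only [sig_apply, sigFun]
    rw [Prod.mk.injEq]
    constructor
    · rw [mul_inv_rev, cs.inv_simple]
      group
    · push_cast
      simp only [beq_iff_eq]
      rcases eq_or_ne ((cs.wordProd ω)⁻¹ * cs.simple i * cs.wordProd ω) t with h | h
      · rw [if_pos (hiff.mpr h), if_pos h]
        ring
      · rw [if_neg (fun hh => h (hiff.mp hh)), if_neg h]
        ring

theorem semiconj_pow (a b : W) (n : ℕ) : b * (a * b) ^ n = (b * a) ^ n * b := by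
  induction n with
  | zero => simp
  | succ n ih =>
    rw [pow_succ, ← mul_assoc, ih, pow_succ]
    simp [mul_assoc]

/-- The `k`-th entry (from the right) of the right inversion sequence of an alternating word. -/
theorem conj_prod_alternatingWord (i j : B) (n : ℕ) :
    (cs.wordProd (alternatingWord i j n))⁻¹ * cs.simple (if Even n then j else i)
        * cs.wordProd (alternatingWord i j n)
      = (cs.simple j * cs.simple i) ^ n * cs.simple j := by
  set x := cs.simple i with hx
  set y := cs.simple j with hy
  have hinv : (x * y)⁻¹ = y * x := by
    rw [mul_inv_rev, hx, hy, cs.inv_simple, cs.inv_simple]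
  rcases Nat.even_or_odd n with he | ho
  · obtain ⟨c, rfl⟩ := he
    rw [if_pos ⟨c, rfl⟩, cs.prod_alternatingWord_eq_mul_pow]
    have h2 : ¬ Even (c + c) → False := fun h => h ⟨c, rfl⟩
    rw [if_pos ⟨c, rfl⟩, one_mul]
    have hdiv : (c + c) / 2 = c := by omega
    rw [hdiv]
    calc ((x * y) ^ c)⁻¹ * y * (x * y) ^ c
        = ((x * y) ^ c)⁻¹ * (y * (x * y) ^ c) := by rw [mul_assoc]
      _ = ((x * y)⁻¹) ^ c * ((y * x) ^ c * y) := by rw [semiconj_pow, inv_pow]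
      _ = (y * x) ^ c * ((y * x) ^ c * y) := by rw [hinv]
      _ = (y * x) ^ (c + c) * y := by rw [pow_add, mul_assoc]
  · obtain ⟨c, rfl⟩ := ho
    rw [if_neg (by simp [Nat.even_add_one, parity_simps]), cs.prod_alternatingWord_eq_mul_pow]
    rw [if_neg (by simp [Nat.even_add_one, parity_simps]), ← hy]
    have hdiv : (2 * c + 1) / 2 = c := by omega
    rw [hdiv]
    have hyy : y⁻¹ = y := by rw [hy, cs.inv_simple]
    calc (y * (x * y) ^ c)⁻¹ * x * (y * (x * y) ^ c)
        = ((x * y) ^ c)⁻¹ * (y * (x * (y * (x * y) ^ c))) := by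
          rw [mul_inv_rev, hyy]
          simp [mul_assoc]
      _ = ((x * y) ^ c)⁻¹ * (y * ((x * y) ^ (c + 1))) := by
          rw [pow_succ']
          simp [mul_assoc]
      _ = ((x * y)⁻¹) ^ c * ((y * x) ^ (c + 1) * y) := by rw [semiconj_pow, inv_pow]
      _ = (y * x) ^ c * ((y * x) ^ (c + 1) * y) := by rw [hinv]
      _ = (y * x) ^ (2 * c + 1) * y := by
          rw [← mul_assoc, ← pow_add]
          congr 2
          omega

theorem rightInvSeq_alternatingWord (i j : B) (n : ℕ) :
    cs.rightInvSeq (alternatingWord i j n)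
      = ((List.range n).reverse).map (fun k => (cs.simple j * cs.simple i) ^ k * cs.simple j) := by
  induction n with
  | zero => simp [alternatingWord]
  | succ n ih =>
    rw [alternatingWord_succ']
    have hris : ∀ (a : B) (ω : List B), cs.rightInvSeq (a :: ω) =
        ((cs.wordProd ω)⁻¹ * cs.simple a * cs.wordProd ω) :: cs.rightInvSeq ω := fun _ _ => rfl
    rw [hris, ih, conj_prod_alternatingWord, List.range_succ, List.reverse_append]
    simp

theorem prod_map_sig_alternatingWord (i j : B) (m : ℕ) :
    ((alternatingWord i j (2 * m)).map (sig cs)).prod = (sig cs i * sig cs j) ^ m := by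
  induction m with
  | zero => simp [alternatingWord]
  | succ m ih =>
    have h2 : 2 * (m + 1) = (2 * m + 1) + 1 := by omega
    rw [h2, alternatingWord_succ', if_neg (by simp [Nat.even_add_one, parity_simps]),
      alternatingWord_succ', if_pos (by exact ⟨m, by omega⟩)]
    rw [map_cons, map_cons, prod_cons, prod_cons, ih, pow_succ']
    rw [mul_assoc]

theorem sig_liftable : M.IsLiftable (sig cs) := by
  intro i j
  refine Equiv.ext fun p => ?_
  obtain ⟨t, ε⟩ := p
  rw [← prod_map_sig_alternatingWord, prod_sig_apply]
  have hprod : cs.wordProd (alternatingWord i j (2 * M i j)) = 1 := by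
    rw [cs.prod_alternatingWord_eq_mul_pow, if_pos ⟨M i j, by omega⟩, one_mul,
      (by omega : 2 * M i j / 2 = M i j), cs.simple_mul_simple_pow]
  have hcount : (count t (cs.rightInvSeq (alternatingWord i j (2 * M i j))) : ZMod 2) = 0 := by
    rw [rightInvSeq_alternatingWord, List.map_reverse, List.count_reverse, two_mul,
      List.range_add,
      List.map_append, List.count_append]
    have : (List.range (M i j)).map ((fun k => (cs.simple j * cs.simple i) ^ k * cs.simple j)
        ∘ (fun k => M i j + k)) =
        (List.range (M i j)).map (fun k => (cs.simple j * cs.simple i) ^ k * cs.simple j) := by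
      apply List.map_congr_left
      intro k _
      simp only [Function.comp_apply]
      rw [pow_add, cs.simple_mul_simple_pow', one_mul]
    rw [List.map_map, this]
    push_cast
    rw [← two_mul, (by decide : (2 : ZMod 2) = 0), zero_mul]
  rw [hprod, hcount]
  simp

/-- The parity homomorphism `W →* Perm (W × ZMod 2)`. -/
noncomputable def etaHom : W →* Equiv.Perm (W × ZMod 2) := cs.lift ⟨sig cs, sig_liftable cs⟩

theorem etaHom_simple (i : B) : etaHom cs (cs.simple i) = sig cs i :=
  cs.lift_apply_simple (sig_liftable cs) i

theorem etaHom_wordProd (ω : List B) : etaHom cs (cs.wordProd ω) = (ω.map (sig cs)).prod := by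
  induction ω with
  | nil => simp [cs.wordProd_nil]
  | cons i ω ih => rw [cs.wordProd_cons, map_mul, etaHom_simple, map_cons, prod_cons, ih]

/-- `eta cs w t` is the parity of the number of occurrences of `t` in the right inversion
sequence of any word for `w`. -/
noncomputable def eta (w t : W) : ZMod 2 := ((etaHom cs w) (t, 0)).2

theorem eta_eq_count (ω : List B) (t : W) :
    eta cs (cs.wordProd ω) t = ((cs.rightInvSeq ω).count t : ZMod 2) := by
  rw [eta, etaHom_wordProd, prod_sig_apply, zero_add]

theorem etaHom_apply (w t : W) (ε : ZMod 2) :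
    (etaHom cs w) (t, ε) = (w * t * w⁻¹, ε + eta cs w t) := by
  obtain ⟨ω, rfl⟩ := cs.wordProd_surjective w
  rw [etaHom_wordProd, prod_sig_apply, eta_eq_count]

theorem eta_mul (u v t : W) : eta cs (u * v) t = eta cs v t + eta cs u (v * t * v⁻¹) := by
  have := congrArg Prod.snd
    ((map_mul (etaHom cs) u v) ▸ (Equiv.Perm.mul_apply (etaHom cs u) (etaHom cs v) (t, 0)))
  rw [eta, map_mul, Equiv.Perm.mul_apply, etaHom_apply cs v, etaHom_apply cs u, zero_add]

theorem eta_one (t : W) : eta cs 1 t = 0 := by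
  rw [eta, map_one]
  rfl

theorem eta_simple_self (i : B) : eta cs (cs.simple i) (cs.simple i) = 1 := by
  rw [eta, etaHom_simple]
  simp [sigFun]

theorem eta_inv (w t : W) : eta cs w⁻¹ t = eta cs w (w⁻¹ * t * w) := by
  have h := eta_mul cs w w⁻¹ t
  rw [mul_inv_cancel, eta_one, inv_inv] at h
  have : ∀ a b : ZMod 2, 0 = a + b → a = b := by decide
  exact this _ _ h

theorem eta_isReflection_self {t : W} (ht : cs.IsReflection t) : eta cs t t = 1 := by
  obtain ⟨w, i, rfl⟩ := ht
  set t := w * cs.simple i * w⁻¹ with hts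
  have hc1 : (cs.simple i * w⁻¹) * t * (cs.simple i * w⁻¹)⁻¹ = cs.simple i := by
    rw [hts, mul_inv_rev, inv_inv, cs.inv_simple]
    simp [mul_assoc]
  have hc2 : w⁻¹ * t * w = cs.simple i := by
    rw [hts]
    group
  have hsplit : t = w * (cs.simple i * w⁻¹) := by rw [hts, mul_assoc]
  have e1 : eta cs t t = eta cs (cs.simple i * w⁻¹) t + eta cs w (cs.simple i) := by
    nth_rewrite 1 [hsplit]
    rw [eta_mul, hc1]
  have e2 : eta cs (cs.simple i * w⁻¹) t = eta cs w⁻¹ t + eta cs (cs.simple i) (cs.simple i) := by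
    rw [eta_mul]
    congr 2
    rw [← hc2, inv_inv]
  have e3 : eta cs w⁻¹ t = eta cs w (cs.simple i) := by
    rw [eta_inv, hc2]
  rw [e1, e2, e3, eta_simple_self]
  generalize eta cs w (cs.simple i) = a
  revert a; decide

theorem length_mul_lt_of_eta_eq_one {w t : W} (h : eta cs w t = 1) :
    cs.length (w * t) < cs.length w := by
  obtain ⟨ω, hred, rfl⟩ := cs.exists_reduced_word' w
  rw [eta_eq_count] at h
  have hcount : (cs.rightInvSeq ω).count t ≠ 0 := by
    intro h0
    rw [h0] at h
    simp at h
  have hmem : t ∈ cs.rightInvSeq ω := by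
    rcases List.count_pos_iff.mp (Nat.pos_of_ne_zero hcount) with h'
    exact h'
  obtain ⟨j, hj, hget⟩ := List.getElem_of_mem hmem
  have hjlen : j < ω.length := by
    rwa [cs.length_rightInvSeq] at hj
  have hgetD : (cs.rightInvSeq ω).getD j 1 = t := by
    rw [List.getD_eq_getElem _ _ hj, hget]
  have herase := cs.wordProd_mul_getD_rightInvSeq ω j
  rw [hgetD] at herase
  calc cs.length (cs.wordProd ω * t) = cs.length (cs.wordProd (ω.eraseIdx j)) := by rw [herase]
    _ ≤ (ω.eraseIdx j).length := cs.length_wordProd_le _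
    _ < ω.length := by
        rw [List.length_eraseIdx]
        simp only [hjlen, if_pos]
        omega
    _ = cs.length (cs.wordProd ω) := hred.symm

theorem eta_eq_one_of_length_mul_lt {w t : W} (ht : cs.IsReflection t)
    (h : cs.length (w * t) < cs.length w) : eta cs w t = 1 := by
  by_contra hne
  have h0 : eta cs w t = 0 := by
    revert hne
    generalize eta cs w t = a
    revert a; decide
  have hw : w = (w * t) * t := by
    rw [mul_assoc, ht.mul_self, mul_one]
  have h1 : eta cs ((w * t) * t) t = 1 + eta cs (w * t) t := by
    rw [eta_mul]
    have h2 : t * t * t⁻¹ = t := by rw [ht.mul_self, one_mul, ht.inv]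
    rw [h2, eta_isReflection_self cs ht]
  rw [← hw, h0] at h1
  have h3 : eta cs (w * t) t = 1 := by
    have : ∀ a : ZMod 2, (0 : ZMod 2) = 1 + a → a = 1 := by decide
    exact this _ h1
  have h4 := length_mul_lt_of_eta_eq_one cs h3
  rw [← hw] at h4
  omega

theorem mem_rightInvSeq_of_length_mul_lt {t : W} (ht : cs.IsReflection t) (ω : List B)
    (h : cs.length (cs.wordProd ω * t) < cs.length (cs.wordProd ω)) :
    t ∈ cs.rightInvSeq ω := by
  have h1 := eta_eq_one_of_length_mul_lt cs ht h
  rw [eta_eq_count] at h1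
  have : (cs.rightInvSeq ω).count t ≠ 0 := by
    intro h0
    rw [h0] at h1
    simp at h1
  exact List.count_pos_iff.mp (Nat.pos_of_ne_zero this)

/-- Strong exchange property (left version). -/
theorem exists_eraseIdx_of_length_simple_mul_lt {t : W} (ht : cs.IsReflection t) (ω : List B)
    (h : cs.length (t * cs.wordProd ω) < cs.length (cs.wordProd ω)) :
    ∃ j < ω.length, t * cs.wordProd ω = cs.wordProd (ω.eraseIdx j) := by
  have hmemrev : t ∈ cs.rightInvSeq ω.reverse := by
    apply mem_rightInvSeq_of_length_mul_lt cs ht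
    rw [cs.wordProd_reverse, cs.length_inv]
    have : (cs.wordProd ω)⁻¹ * t = (t * cs.wordProd ω)⁻¹ := by
      rw [mul_inv_rev, ht.inv]
    rw [this, cs.length_inv]
    exact h
  have hmem : t ∈ cs.leftInvSeq ω := by
    rw [cs.rightInvSeq_reverse, List.mem_reverse] at hmemrev
    exact hmemrev
  obtain ⟨j, hj, hget⟩ := List.getElem_of_mem hmem
  have hjlen : j < ω.length := by
    rwa [cs.length_leftInvSeq] at hj
  have hgetD : (cs.leftInvSeq ω).getD j 1 = t := by
    rw [List.getD_eq_getElem _ _ hj, hget]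
  refine ⟨j, hjlen, ?_⟩
  rw [← hgetD]
  exact cs.getD_leftInvSeq_mul_wordProd ω j

theorem le_of_isLeftDescent {w : W} {i : B} (hw : cs.IsLeftDescent w i) :
    BruhatLE cs (cs.simple i * w) w := by
  refine Relation.ReflTransGen.single ⟨cs.simple i, cs.isReflection_simple i, ?_, hw⟩
  rw [← mul_assoc, cs.simple_mul_simple_self, one_mul]

theorem length_simple_mul_of_not_descent {w : W} {i : B} (h : ¬ cs.IsLeftDescent w i) :
    cs.length (cs.simple i * w) = cs.length w + 1 := by
  rcases cs.length_simple_mul w i with h1 | h1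
  · exact h1
  · exact absurd (by omega : cs.length (cs.simple i * w) < cs.length w) h

theorem length_simple_mul_of_descent {w : W} {i : B} (h : cs.IsLeftDescent w i) :
    cs.length (cs.simple i * w) + 1 = cs.length w := by
  rcases cs.length_simple_mul w i with h1 | h1
  · exact absurd h (by rw [IsLeftDescent, h1]; omega)
  · exact h1

theorem simple_mul_le_of_step {u v : W} (i : B) (hs : Step cs u v)
    (hv : cs.IsLeftDescent v i) (hu : ¬ cs.IsLeftDescent u i) :
    BruhatLE cs (cs.simple i * u) v := by
  obtain ⟨t, ht, rfl, hlen⟩ := hs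
  have hlu : cs.length (cs.simple i * u) = cs.length u + 1 :=
    length_simple_mul_of_not_descent cs hu
  have hlv : cs.length (cs.simple i * (t * u)) + 1 = cs.length (t * u) :=
    length_simple_mul_of_descent cs hv
  have hconj : cs.simple i * (t * u) = (cs.simple i * t * (cs.simple i)⁻¹) * (cs.simple i * u) := by
    group
  rcases lt_trichotomy (cs.length (cs.simple i * u)) (cs.length (cs.simple i * (t * u)))
    with hlt | heq | hgt
  · refine Relation.ReflTransGen.head
      ⟨cs.simple i * t * (cs.simple i)⁻¹, ht.conj (cs.simple i), hconj, hlt⟩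
      (le_of_isLeftDescent cs hv)
  · exfalso
    apply (ht.conj (cs.simple i)).length_mul_right_ne (cs.simple i * u)
    rw [← hconj, heq]
  · -- ℓ(s i * (t * u)) < ℓ(s i * u); forces ℓ(t*u) = ℓ u + 1 and then strong exchange
    have hltu : cs.length (t * u) = cs.length u + 1 := by omega
    obtain ⟨τ, hτred, hτw⟩ := cs.exists_reduced_word' (cs.simple i * (t * u))
    have hπ : cs.wordProd (i :: τ) = t * u := by
      rw [cs.wordProd_cons, ← hτw, ← mul_assoc, cs.simple_mul_simple_self, one_mul]
    have httu : t * (t * u) = u := by rw [← mul_assoc, ht.mul_self, one_mul]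
    have hlt2 : cs.length (t * cs.wordProd (i :: τ)) < cs.length (cs.wordProd (i :: τ)) := by
      rw [hπ, httu]
      exact hlen
    obtain ⟨j, hj, hje⟩ := exists_eraseIdx_of_length_simple_mul_lt cs ht (i :: τ) hlt2
    rw [hπ, httu] at hje
    have hτlen : τ.length = cs.length u := by
      rw [← hτred, ← hτw]
      omega
    cases j with
    | zero =>
      have hueq : u = cs.wordProd τ := hje
      have hueq2 : u = cs.simple i * (t * u) := hueq.trans hτw.symm
      have heq : cs.simple i * u = t * u := by
        have h5 := congrArg (fun z => cs.simple i * z) hueq2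
        rw [← mul_assoc, cs.simple_mul_simple_self, one_mul] at h5
        exact h5
      rw [heq]
      exact Relation.ReflTransGen.refl
    | succ j' =>
      exfalso
      have hje' : u = cs.simple i * cs.wordProd (τ.eraseIdx j') := by
        rw [hje]
        rfl
      have : cs.simple i * u = cs.wordProd (τ.eraseIdx j') := by
        rw [hje', ← mul_assoc, cs.simple_mul_simple_self, one_mul]
      have hlen2 : cs.length (cs.simple i * u) ≤ (τ.eraseIdx j').length := by
        rw [this]
        exact cs.length_wordProd_le _
      have hj' : j' < τ.length := by
        simpa using hj
      rw [List.length_eraseIdx] at hlen2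
      simp only [hj', if_pos] at hlen2
      omega

theorem simple_mul_le {w : W} (i : B) (hw : cs.IsLeftDescent w i) :
    ∀ {u : W}, BruhatLE cs u w → BruhatLE cs (cs.simple i * u) w := by
  intro u h
  induction h using Relation.ReflTransGen.head_induction_on with
  | refl => exact le_of_isLeftDescent cs hw
  | @head a c hs hrest ih =>
    by_cases hda : cs.IsLeftDescent a i
    · exact (le_of_isLeftDescent cs hda).trans
        ((Relation.ReflTransGen.single hs).trans hrest)
    · by_cases hdc : cs.IsLeftDescent c i
      · exact (simple_mul_le_of_step cs i hs hdc hda).trans hrest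
      · obtain ⟨t, ht, rfl, hlen⟩ := hs
        have h1 : cs.length (cs.simple i * a) = cs.length a + 1 :=
          length_simple_mul_of_not_descent cs hda
        have h2 : cs.length (cs.simple i * (t * a)) = cs.length (t * a) + 1 :=
          length_simple_mul_of_not_descent cs hdc
        have hconj : cs.simple i * (t * a)
            = (cs.simple i * t * (cs.simple i)⁻¹) * (cs.simple i * a) := by group
        refine (Relation.ReflTransGen.single
          ⟨cs.simple i * t * (cs.simple i)⁻¹, ht.conj (cs.simple i), hconj, by omega⟩).trans ih

theorem step_inv {u v : W} (h : Step cs u v) : Step cs u⁻¹ v⁻¹ := by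
  obtain ⟨t, ht, rfl, hlen⟩ := h
  refine ⟨u⁻¹ * t * u, ?_, ?_, ?_⟩
  · have := ht.conj u⁻¹
    rwa [inv_inv] at this
  · rw [mul_inv_rev, ht.inv, mul_assoc]
    simp
  · rw [cs.length_inv, cs.length_inv]
    exact hlen

theorem bruhatLE_inv {u v : W} (h : BruhatLE cs u v) : BruhatLE cs u⁻¹ v⁻¹ := by
  induction h with
  | refl => exact Relation.ReflTransGen.refl
  | tail hs hstep ih => exact ih.tail (step_inv cs hstep)

theorem mul_simple_le {w : W} (i : B) (hw : cs.IsRightDescent w i) :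
    ∀ {u : W}, BruhatLE cs u w → BruhatLE cs (u * cs.simple i) w := by
  intro u h
  have h1 : cs.IsLeftDescent w⁻¹ i := cs.isLeftDescent_inv_iff.mpr hw
  have h2 := bruhatLE_inv cs (simple_mul_le cs i h1 (bruhatLE_inv cs h))
  rwa [mul_inv_rev, inv_inv, inv_inv, cs.inv_simple] at h2

theorem parabolic_left_mul_le {w x : W} (hx : x ∈ parabolic cs (leftDescents cs w)) :
    ∀ u : W, BruhatLE cs u w → BruhatLE cs (x * u) w := by
  have key : (∀ u : W, BruhatLE cs u w → BruhatLE cs (x * u) w) ∧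
      (∀ u : W, BruhatLE cs u w → BruhatLE cs (x⁻¹ * u) w) := by
    induction hx using Subgroup.closure_induction with
    | mem g hg =>
      obtain ⟨i, hi, rfl⟩ := hg
      constructor
      · exact fun u hu => simple_mul_le cs i hi hu
      · intro u hu
        rw [cs.inv_simple]
        exact simple_mul_le cs i hi hu
    | one => constructor <;> intro u hu <;> simpa using hu
    | mul a b ha hb iha ihb =>
      constructor
      · intro u hu
        rw [mul_assoc]
        exact iha.1 _ (ihb.1 _ hu)
      · intro u hu
        rw [mul_inv_rev, mul_assoc]
        exact ihb.2 _ (iha.2 _ hu)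
    | inv a ha iha =>
      refine ⟨iha.2, ?_⟩
      intro u hu
      rw [inv_inv]
      exact iha.1 _ hu
  exact key.1

theorem parabolic_mul_right_le {w y : W} (hy : y ∈ parabolic cs (rightDescents cs w)) :
    ∀ u : W, BruhatLE cs u w → BruhatLE cs (u * y) w := by
  have key : (∀ u : W, BruhatLE cs u w → BruhatLE cs (u * y) w) ∧
      (∀ u : W, BruhatLE cs u w → BruhatLE cs (u * y⁻¹) w) := by
    induction hy using Subgroup.closure_induction with
    | mem g hg =>
      obtain ⟨i, hi, rfl⟩ := hg
      constructor
      · exact fun u hu => mul_simple_le cs i hi hu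
      · intro u hu
        rw [cs.inv_simple]
        exact mul_simple_le cs i hi hu
    | one => constructor <;> intro u hu <;> simpa using hu
    | mul a b ha hb iha ihb =>
      constructor
      · intro u hu
        rw [← mul_assoc]
        exact ihb.1 _ (iha.1 _ hu)
      · intro u hu
        rw [mul_inv_rev, ← mul_assoc]
        exact iha.2 _ (ihb.2 _ hu)
    | inv a ha iha =>
      refine ⟨iha.2, ?_⟩
      intro u hu
      rw [inv_inv]
      exact iha.1 _ hu
  exact key.1


/-- The double coset `W_{D_L(w)} u W_{D_R(w)}` is contained in the lower interval `[e, w]`. -/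
theorem bCoset_subset_lowerInterval (cs : CoxeterSystem M W) (w u : W)
    (h : BruhatLE cs u w) (x y : W)
    (hx : x ∈ parabolic cs (leftDescents cs w)) (hy : y ∈ parabolic cs (rightDescents cs w)) :
    BruhatLE cs (x * u * y) w :=
  parabolic_mul_right_le cs hy (x * u) (parabolic_left_mul_le cs hx u h)

end CoxeterBruhat
end

section
/- Let (W,S) be a Coxeter system, w ∈ W separated, and u ⋖ v a Bruhat covering relation with u, v ≤ w (ℓ(v) = ℓ(u) + 1). Then either u and v lie in the same double coset W_{D_L(w)}·W_{D_R(w)} and side_w(v) = side_w(u) + 1, or they lie in different double cosets and side_w(u) = side_w(v). In particular side_w is weakly increasing on B(w) when w is separated. -/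
open CoxeterSystem List

variable {B W : Type*} [Group W] {M : CoxeterMatrix B}

namespace CoxeterBruhat

namespace Aux

open scoped Classical

set_option linter.unusedSectionVars false

/-- Mod-2 count of an element in a list. -/
noncomputable def cnt (t : W) (l : List W) : ZMod 2 :=
  (l.map (fun z => if z = t then (1 : ZMod 2) else 0)).sum

theorem cnt_nil (t : W) : cnt t ([] : List W) = 0 := by simp [cnt]

theorem cnt_cons (t a : W) (l : List W) :
    cnt t (a :: l) = (if a = t then (1 : ZMod 2) else 0) + cnt t l := by
  simp [cnt]

theorem cnt_append (t : W) (l₁ l₂ : List W) :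
    cnt t (l₁ ++ l₂) = cnt t l₁ + cnt t l₂ := by
  simp [cnt]

theorem cnt_reverse (t : W) (l : List W) : cnt t l.reverse = cnt t l := by
  classical
  simp [cnt, List.sum_reverse]

theorem cnt_singleton_self (t : W) : cnt t [t] = 1 := by
  classical simp [cnt]

theorem cnt_map (t t' : W) (f : W → W) (l : List W)
    (hf : ∀ z, f z = t ↔ z = t') : cnt t (l.map f) = cnt t' l := by
  classical
  simp only [cnt, List.map_map]
  congr 1
  apply List.map_congr_left
  intro a _
  by_cases h : a = t'
  · subst h
    have h2 : f a = t := (hf a).2 rfl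
    simp [Function.comp, h2]
  · have h2 : ¬ f a = t := fun hh => h ((hf a).1 hh)
    simp [Function.comp, h, h2]

theorem cnt_eq_zero_of_not_mem {t : W} {l : List W} (h : t ∉ l) : cnt t l = 0 := by
  classical
  induction l with
  | nil => simp [cnt]
  | cons a l ih =>
    rw [cnt_cons]
    have h1 : a ≠ t := fun hh => h (by simp [hh])
    rw [if_neg h1, ih (fun hh => h (List.mem_cons_of_mem _ hh)), add_zero]

theorem mem_of_cnt_eq_one {t : W} {l : List W} (h : cnt t l = 1) : t ∈ l := by
  by_contra hn
  rw [cnt_eq_zero_of_not_mem hn] at h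
  exact one_ne_zero h.symm

variable (cs : CoxeterSystem M W)

/-- The function underlying the parity permutation attached to a simple reflection. -/
noncomputable def sigmaFun (i : B) : W × ZMod 2 → W × ZMod 2 :=
  fun p => (cs.simple i * p.1 * cs.simple i,
    p.2 + if p.1 = cs.simple i then 1 else 0)

theorem sigmaFun_involutive (i : B) : Function.Involutive (sigmaFun cs i) := by
  classical
  intro p
  obtain ⟨x, e⟩ := p
  simp only [sigmaFun]
  refine Prod.ext ?_ ?_
  · simp [← mul_assoc]
  · simp only
    have hiff : cs.simple i * x * cs.simple i = cs.simple i ↔ x = cs.simple i := by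
      constructor
      · intro h
        have := congrArg (fun z => cs.simple i * z * cs.simple i) h
        simpa [← mul_assoc] using this
      · intro h; rw [h]; simp
    show (e + (if x = cs.simple i then 1 else 0)
      + if cs.simple i * x * cs.simple i = cs.simple i then 1 else 0) = e
    by_cases h : x = cs.simple i
    · rw [if_pos h, if_pos (hiff.2 h)]
      have : (1 : ZMod 2) + 1 = 0 := by decide
      rw [add_assoc, this, add_zero]
    · rw [if_neg h, if_neg (fun hh => h (hiff.1 hh))]
      simp

/-- The parity permutation attached to a simple reflection. -/
noncomputable def sigma (i : B) : Equiv.Perm (W × ZMod 2) :=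
  (sigmaFun_involutive cs i).toPerm

theorem sigma_apply (i : B) (p : W × ZMod 2) : sigma cs i p = sigmaFun cs i p := rfl

/-- Product of parity permutations along a word. -/
noncomputable def Phi (ω : List B) : Equiv.Perm (W × ZMod 2) :=
  (ω.map (sigma cs)).prod

theorem Phi_nil : Phi cs ([] : List B) = 1 := rfl

theorem Phi_cons (i : B) (ω : List B) : Phi cs (i :: ω) = sigma cs i * Phi cs ω := by
  simp [Phi]

theorem Phi_append (α β : List B) : Phi cs (α ++ β) = Phi cs α * Phi cs β := by
  simp [Phi]

theorem rightInvSeq_cons (i : B) (ω : List B) :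
    cs.rightInvSeq (i :: ω) =
      ((cs.wordProd ω)⁻¹ * cs.simple i * cs.wordProd ω) :: cs.rightInvSeq ω := rfl

theorem Phi_apply (ω : List B) (x : W) (e : ZMod 2) :
    Phi cs ω (x, e) =
      (cs.wordProd ω * x * (cs.wordProd ω)⁻¹, e + cnt x (cs.rightInvSeq ω)) := by
  classical
  induction ω generalizing e with
  | nil => simp [Phi_nil, cnt_nil]
  | cons i ω ih =>
    rw [Phi_cons, Equiv.Perm.mul_apply, ih, sigma_apply]
    simp only [sigmaFun]
    refine Prod.ext ?_ ?_
    · simp [cs.wordProd_cons, mul_assoc]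
    · simp only [rightInvSeq_cons, cnt_cons]
      have hiff : cs.wordProd ω * x * (cs.wordProd ω)⁻¹ = cs.simple i ↔
          (cs.wordProd ω)⁻¹ * cs.simple i * cs.wordProd ω = x := by
        constructor
        · intro h
          rw [← h]; group
        · intro h
          rw [← h]; group
      by_cases h : (cs.wordProd ω)⁻¹ * cs.simple i * cs.wordProd ω = x
      · rw [if_pos (hiff.2 h), if_pos h]; ring
      · rw [if_neg (fun hh => h (hiff.1 hh)), if_neg h]; ring

/-! ### Alternating words and the braid check -/

theorem alternatingWord_add (i i' : B) (m n : ℕ) :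
    alternatingWord i i' (m + n) =
      (if Even n then alternatingWord i i' m else alternatingWord i' i m)
        ++ alternatingWord i i' n := by
  induction m with
  | zero => simp [alternatingWord]
  | succ m ih =>
    have h1 : m + 1 + n = (m + n) + 1 := by omega
    rw [h1, alternatingWord_succ' i i' (m + n), ih]
    by_cases hn : Even n <;> by_cases hm : Even m <;>
      simp [alternatingWord_succ', Nat.even_add, hn, hm]

theorem prod_alt_self (i i' : B) :
    cs.wordProd (alternatingWord i i' (M i i' + M i i')) = 1 := by
  rw [cs.prod_alternatingWord_eq_mul_pow]
  have he : Even (M i i' + M i i') := ⟨M i i', rfl⟩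
  rw [if_pos he, one_mul]
  have h2 : (M i i' + M i i') / 2 = M i i' := by omega
  rw [h2, cs.simple_mul_simple_pow]

theorem rightInvSeq_append (α β : List B) :
    cs.rightInvSeq (α ++ β) =
      (cs.rightInvSeq α).map (fun t => (cs.wordProd β)⁻¹ * t * cs.wordProd β)
        ++ cs.rightInvSeq β := by
  induction α with
  | nil => simp
  | cons a α ih =>
    rw [cons_append, rightInvSeq_cons, rightInvSeq_cons, ih, map_cons, cons_append]
    congr 1
    rw [cs.wordProd_append]
    simp [mul_assoc]

theorem simple_mul_prod_alt (x y : B) (h1 : 1 ≤ M x y) :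
    cs.simple (if Even (M x y) then y else x) * cs.wordProd (alternatingWord x y (M x y)) =
      cs.wordProd (alternatingWord x y (M x y)) * cs.simple y := by
  have hsucc : cs.simple (if Even (M x y) then y else x) *
      cs.wordProd (alternatingWord x y (M x y))
      = cs.wordProd (alternatingWord x y (M x y + 1)) := by
    rw [alternatingWord_succ' x y (M x y), cs.wordProd_cons]
  have hsub := cs.prod_alternatingWord_eq_prod_alternatingWord_sub x y (M x y + 1) (by omega)
  have h2 : M x y * 2 - (M x y + 1) = M x y - 1 := by omega
  have hconcat : cs.wordProd (alternatingWord x y (M x y)) =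
      cs.wordProd (alternatingWord y x (M x y - 1)) * cs.simple y := by
    conv_lhs => rw [show M x y = (M x y - 1) + 1 by omega, alternatingWord_succ]
    rw [cs.wordProd_concat]
  rw [hsucc, hsub, h2, hconcat, mul_assoc]
  simp

theorem prod_alt_swap (x y : B) :
    cs.wordProd (alternatingWord y x (M x y)) = cs.wordProd (alternatingWord x y (M x y)) := by
  have h2 := (cs.wordProd_braidWord_eq x y).symm
  rwa [show CoxeterSystem.braidWord M x y = alternatingWord x y (M x y) from rfl,
       show CoxeterSystem.braidWord M y x = alternatingWord y x (M y x) from rfl,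
       M.symmetric y x] at h2

theorem conj_helper {G : Type*} [Group G] (P Q R SX SY : G)
    (hPQ : P * Q = Q * R) (hc : SX * Q = Q * SY) :
    Q⁻¹ * (P⁻¹ * SX * P) * Q = R⁻¹ * SY * R := by
  have hP' : P = Q * R * Q⁻¹ := by rw [← hPQ]; group
  have h2 : Q⁻¹ * SX * Q = SY := by
    rw [mul_assoc, hc, ← mul_assoc, inv_mul_cancel, one_mul]
  rw [hP']
  calc Q⁻¹ * ((Q * R * Q⁻¹)⁻¹ * SX * (Q * R * Q⁻¹)) * Q
      = R⁻¹ * (Q⁻¹ * SX * Q) * R := by group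
    _ = R⁻¹ * SY * R := by rw [h2]

theorem comm_even (x y : B) (h1 : 1 ≤ M x y) (he : Even (M x y)) :
    cs.simple y * cs.wordProd (alternatingWord x y (M x y)) =
      cs.wordProd (alternatingWord x y (M x y)) * cs.simple y := by
  have h := simple_mul_prod_alt cs x y h1
  rwa [if_pos he] at h

theorem comm_odd (x y : B) (h1 : 1 ≤ M x y) (ho : ¬ Even (M x y)) :
    cs.simple x * cs.wordProd (alternatingWord x y (M x y)) =
      cs.wordProd (alternatingWord x y (M x y)) * cs.simple y := by
  have h := simple_mul_prod_alt cs x y h1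
  rwa [if_neg ho] at h

theorem drop_alternatingWord (a b : B) (j m : ℕ) :
    (alternatingWord a b m).drop j = alternatingWord a b (m - j) := by
  induction j generalizing m with
  | zero => simp
  | succ j ih =>
    cases m with
    | zero => simp [alternatingWord]
    | succ m =>
      rw [alternatingWord_succ' a b m, List.drop_succ_cons, ih m]
      congr 1
      omega

theorem get?_alternatingWord (a b : B) (m j : ℕ) (h : j < m) :
    (alternatingWord a b m)[j]? = some (if Even (m - j - 1) then b else a) := by
  induction j generalizing m with
  | zero =>
    cases m with
    | zero => omega
    | succ m => rw [alternatingWord_succ']; simp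
  | succ j ih =>
    cases m with
    | zero => omega
    | succ m =>
      rw [alternatingWord_succ']
      have h2 : m + 1 - (j + 1) - 1 = m - j - 1 := by omega
      rw [show ((if Even m then b else a) :: alternatingWord a b m)[j+1]?
            = (alternatingWord a b m)[j]? from rfl, ih m (by omega), h2]

theorem list_eq_of_getD (l₁ l₂ : List W) (h : l₁.length = l₂.length)
    (h2 : ∀ n < l₁.length, l₁.getD n 1 = l₂.getD n 1) : l₁ = l₂ := by
  apply List.ext_getElem h
  intro n h₁ h₂'
  have := h2 n h₁
  rwa [List.getD_eq_getElem, List.getD_eq_getElem] at this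

theorem ris_alt_conj (i i' : B) (h1 : 1 ≤ M i i') :
    (cs.rightInvSeq (if Even (M i i') then alternatingWord i i' (M i i')
        else alternatingWord i' i (M i i'))).map
        (fun t => (cs.wordProd (alternatingWord i i' (M i i')))⁻¹ * t
          * cs.wordProd (alternatingWord i i' (M i i')))
      = cs.rightInvSeq (alternatingWord i i' (M i i')) := by
  set m₀ := M i i' with hm₀
  set Q := cs.wordProd (alternatingWord i i' m₀) with hQ
  have hQswap : cs.wordProd (alternatingWord i' i m₀) = Q := prod_alt_swap cs i i'
  have hMsymm : M i' i = m₀ := M.symmetric i' i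
  have h1' : 1 ≤ M i' i := by omega
  have hii : Even m₀ → cs.simple i * Q = Q * cs.simple i := by
    intro he
    have h := comm_even cs i' i h1' (by rwa [hMsymm])
    rwa [hMsymm, hQswap] at h
  have hii' : Even m₀ → cs.simple i' * Q = Q * cs.simple i' := fun he =>
    comm_even cs i i' h1 he
  have hoi : ¬ Even m₀ → cs.simple i * Q = Q * cs.simple i' := fun ho =>
    comm_odd cs i i' h1 ho
  have hoi' : ¬ Even m₀ → cs.simple i' * Q = Q * cs.simple i := by
    intro ho
    have h := comm_odd cs i' i h1' (by rwa [hMsymm])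
    rwa [hMsymm, hQswap] at h
  apply list_eq_of_getD
  · by_cases he : Even m₀ <;> simp [he]
  · intro n hn
    have hlen : n < m₀ := by
      by_cases he : Even m₀ <;> simpa [he] using hn
    have hgmap : ∀ (L : List W) (k : ℕ),
        ((L.map (fun t => Q⁻¹ * t * Q)).getD k 1) = Q⁻¹ * (L.getD k 1) * Q := by
      intro L k
      by_cases hk : k < L.length
      · rw [List.getD_eq_getElem _ _ (by simpa using hk), List.getElem_map,
          List.getD_eq_getElem _ _ hk]
      · rw [List.getD_eq_default _ _ (by simpa using Nat.le_of_not_lt hk),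
          List.getD_eq_default _ _ (by simpa using Nat.le_of_not_lt hk)]
        simp
    -- the products of the dropped tails satisfy P * Q = Q * R
    have hXprod : cs.wordProd (if Even m₀ then alternatingWord i i' (m₀ - n - 1)
        else alternatingWord i' i (m₀ - n - 1)) * Q
        = Q * cs.wordProd (alternatingWord i i' (m₀ - n - 1)) := by
      have e1 : (if Even m₀ then alternatingWord i i' (m₀ - n - 1)
          else alternatingWord i' i (m₀ - n - 1)) ++ alternatingWord i i' m₀
          = alternatingWord i i' ((m₀ - n - 1) + m₀) :=
        (alternatingWord_add i i' (m₀ - n - 1) m₀).symm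
      have e2 : alternatingWord i i' ((m₀ - n - 1) + m₀)
          = (if Even (m₀ - n - 1) then alternatingWord i i' m₀
              else alternatingWord i' i m₀) ++ alternatingWord i i' (m₀ - n - 1) := by
        rw [Nat.add_comm (m₀ - n - 1) m₀, alternatingWord_add i i' m₀ (m₀ - n - 1)]
      have e3 := congrArg cs.wordProd (e1.trans e2)
      rw [cs.wordProd_append, cs.wordProd_append] at e3
      rw [← hQ] at e3
      rw [e3]
      by_cases hea : Even (m₀ - n - 1)
      · rw [if_pos hea, ← hQ]
      · rw [if_neg hea, hQswap]
    have hdropY : (alternatingWord i i' m₀).drop (n+1) = alternatingWord i i' (m₀ - n - 1) := by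
      rw [drop_alternatingWord]
      congr 1
      try omega
    rw [hgmap]
    by_cases he : Even m₀
    · simp only [if_pos he] at hXprod ⊢
      rw [cs.getD_rightInvSeq, hdropY, get?_alternatingWord i i' m₀ n hlen]
      by_cases hea : Even (m₀ - n - 1)
      · simp only [if_pos hea, Option.map_some, Option.getD_some]
        exact conj_helper _ Q _ _ _ hXprod (hii' he)
      · simp only [if_neg hea, Option.map_some, Option.getD_some]
        exact conj_helper _ Q _ _ _ hXprod (hii he)
    · simp only [if_neg he] at hXprod ⊢
      have hdropX : (alternatingWord i' i m₀).drop (n+1)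
          = alternatingWord i' i (m₀ - n - 1) := by
        rw [drop_alternatingWord]
        congr 1
        try omega
      rw [cs.getD_rightInvSeq, cs.getD_rightInvSeq, hdropY, hdropX,
        get?_alternatingWord i i' m₀ n hlen, get?_alternatingWord i' i m₀ n hlen]
      by_cases hea : Even (m₀ - n - 1)
      · simp only [if_pos hea, Option.map_some, Option.getD_some]
        exact conj_helper _ Q _ _ _ hXprod (hoi he)
      · simp only [if_neg hea, Option.map_some, Option.getD_some]
        exact conj_helper _ Q _ _ _ hXprod (hoi' he)

/-! ### The parity representation and strong exchange -/

theorem sandwich_iff {G : Type*} [Group G] {b x : G} (hb : b * b = 1) :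
    (b = b * x * b) ↔ x = b := by
  have hbi : b⁻¹ = b := inv_eq_of_mul_eq_one_right hb
  constructor
  · intro h
    have h2 : x = b⁻¹ * (b * x * b) * b⁻¹ := by group
    rw [← h, hbi, show b * b * b = (b * b) * b from rfl, hb, one_mul] at h2
    exact h2
  · intro h
    rw [h, show b * b * b = (b * b) * b from rfl, hb, one_mul]

theorem sigma_mul_self (i : B) : sigma cs i * sigma cs i = 1 := by
  apply Equiv.ext
  intro p
  exact sigmaFun_involutive cs i p

theorem pow_sigma_eq_Phi (i i' : B) (m : ℕ) :
    (sigma cs i * sigma cs i') ^ m = Phi cs (alternatingWord i i' (m + m)) := by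
  induction m with
  | zero => rw [pow_zero]; rfl
  | succ m ih =>
    have h : m + 1 + (m + 1) = (m + m) + 1 + 1 := by omega
    rw [h, alternatingWord_succ', alternatingWord_succ', Phi_cons, Phi_cons, ← ih]
    have h2 : Even (m + m) := ⟨m, rfl⟩
    have h1 : ¬ Even (m + m + 1) := by simp [Nat.even_add_one, h2]
    rw [if_neg h1, if_pos h2, pow_succ']
    rw [mul_assoc]

theorem liftable : CoxeterMatrix.IsLiftable M (fun i => sigma cs i) := by
  intro i i'
  simp only
  rcases Nat.eq_zero_or_pos (M i i') with h0 | h1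
  · rw [h0, pow_zero]
  · rw [pow_sigma_eq_Phi]
    apply Equiv.ext
    rintro ⟨x, e⟩
    rw [Phi_apply]
    have hprod := prod_alt_self cs i i'
    have hsplit : alternatingWord i i' (M i i' + M i i')
        = (if Even (M i i') then alternatingWord i i' (M i i')
            else alternatingWord i' i (M i i')) ++ alternatingWord i i' (M i i') := by
      rw [alternatingWord_add]
    have hcnt : cnt x (cs.rightInvSeq (alternatingWord i i' (M i i' + M i i'))) = 0 := by
      rw [hsplit, rightInvSeq_append, cnt_append, ris_alt_conj cs i i' h1]
      have h2 : ∀ a : ZMod 2, a + a = 0 := by decide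
      exact h2 _
    rw [hprod, hcnt]
    simp

/-- The parity homomorphism. -/
noncomputable def phi : W →* Equiv.Perm (W × ZMod 2) :=
  cs.lift ⟨fun i => sigma cs i, liftable cs⟩

theorem phi_simple (i : B) : phi cs (cs.simple i) = sigma cs i :=
  cs.lift_apply_simple (liftable cs) i

theorem phi_wordProd (ω : List B) : phi cs (cs.wordProd ω) = Phi cs ω := by
  induction ω with
  | nil => simp [Phi_nil, cs.wordProd_nil]
  | cons a ω ih => rw [cs.wordProd_cons, map_mul, ih, phi_simple, Phi_cons]

theorem cnt_ris_invariant {ω ω' : List B} (h : cs.wordProd ω = cs.wordProd ω') (t : W) :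
    cnt t (cs.rightInvSeq ω) = cnt t (cs.rightInvSeq ω') := by
  have h2 : Phi cs ω (t, 0) = Phi cs ω' (t, 0) := by
    rw [← phi_wordProd, ← phi_wordProd, h]
  rw [Phi_apply, Phi_apply, h] at h2
  have h3 := congrArg Prod.snd h2
  simpa using h3

theorem cnt_lis_ris (ρ : List B) (i : B) :
    cnt (cs.wordProd ρ * cs.simple i * (cs.wordProd ρ)⁻¹) (cs.leftInvSeq ρ)
      = cnt (cs.simple i) (cs.rightInvSeq ρ) := by
  induction ρ generalizing i with
  | nil => simp [cnt_nil]
  | cons b ρ ih =>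
    have hlis : cs.leftInvSeq (b :: ρ)
        = cs.simple b :: (cs.leftInvSeq ρ).map (MulAut.conj (cs.simple b)) := rfl
    rw [hlis, rightInvSeq_cons, cnt_cons, cnt_cons]
    have hT : cs.wordProd (b :: ρ) * cs.simple i * (cs.wordProd (b :: ρ))⁻¹
        = cs.simple b * (cs.wordProd ρ * cs.simple i * (cs.wordProd ρ)⁻¹) * cs.simple b := by
      rw [cs.wordProd_cons]
      simp [mul_assoc]
    rw [hT]
    congr 1
    · -- heads
      have hs1 := sandwich_iff (x := cs.wordProd ρ * cs.simple i * (cs.wordProd ρ)⁻¹)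
        (cs.simple_mul_simple_self b)
      have hiff : (cs.simple b
            = cs.simple b * (cs.wordProd ρ * cs.simple i * (cs.wordProd ρ)⁻¹) * cs.simple b)
          ↔ ((cs.wordProd ρ)⁻¹ * cs.simple b * cs.wordProd ρ = cs.simple i) := by
        rw [hs1]
        constructor
        · intro h
          rw [← h]
          group
        · intro h
          rw [← h]
          group
      by_cases hcond : (cs.wordProd ρ)⁻¹ * cs.simple b * cs.wordProd ρ = cs.simple i
      · rw [if_pos (hiff.2 hcond), if_pos hcond]
      · rw [if_neg (fun hh => hcond (hiff.1 hh)), if_neg hcond]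
    · -- tails
      rw [cnt_map _ (cs.wordProd ρ * cs.simple i * (cs.wordProd ρ)⁻¹)
          (MulAut.conj (cs.simple b)) _ ?_]
      · exact ih i
      · intro z
        rw [MulAut.conj_apply, inv_simple]
        constructor
        · intro h
          exact mul_left_cancel (mul_right_cancel h)
        · intro h
          rw [h]

theorem cnt_pal (ρ : List B) (i : B) :
    cnt (cs.wordProd ρ * cs.simple i * (cs.wordProd ρ)⁻¹)
      (cs.rightInvSeq (ρ ++ ([i] ++ ρ.reverse))) = 1 := by
  set t := cs.wordProd ρ * cs.simple i * (cs.wordProd ρ)⁻¹ with ht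
  rw [rightInvSeq_append, cnt_append]
  have hb : cs.wordProd ([i] ++ ρ.reverse) = cs.simple i * (cs.wordProd ρ)⁻¹ := by
    rw [cs.wordProd_append, cs.wordProd_reverse]
    simp
  have h1 : cnt t ((cs.rightInvSeq ρ).map
      (fun z => (cs.wordProd ([i] ++ ρ.reverse))⁻¹ * z * cs.wordProd ([i] ++ ρ.reverse)))
      = cnt (cs.simple i) (cs.rightInvSeq ρ) := by
    apply cnt_map
    intro z
    rw [hb]
    constructor
    · intro h
      have h2 : z = (cs.simple i * (cs.wordProd ρ)⁻¹) * t
          * (cs.simple i * (cs.wordProd ρ)⁻¹)⁻¹ := by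
        rw [← h]
        group
      rw [h2, ht]
      group
    · intro h
      rw [h, ht]
      group
  rw [h1]
  have h2 : cs.rightInvSeq ([i] ++ ρ.reverse)
      = ((cs.wordProd ρ.reverse)⁻¹ * cs.simple i * cs.wordProd ρ.reverse)
          :: cs.rightInvSeq ρ.reverse := rfl
  rw [h2, cnt_cons]
  have h3 : (cs.wordProd ρ.reverse)⁻¹ * cs.simple i * cs.wordProd ρ.reverse = t := by
    rw [cs.wordProd_reverse, ht]
    group
  rw [if_pos h3]
  have h4 : cnt t (cs.rightInvSeq ρ.reverse) = cnt (cs.simple i) (cs.rightInvSeq ρ) := by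
    rw [cs.rightInvSeq_reverse, cnt_reverse, ht, cnt_lis_ris]
  rw [h4]
  have h5 : ∀ a : ZMod 2, a + (1 + a) = 1 := by decide
  exact h5 _

/-- Strong exchange property, right version, for arbitrary words. -/
theorem strong_exchange_right {w t : W} (hwt : cs.IsRightInversion w t) :
    ∀ ω : List B, cs.wordProd ω = w →
      ∃ η, η <+ ω ∧ η.length + 1 = ω.length ∧ w * t = cs.wordProd η := by
  obtain ⟨ht, hlt⟩ := hwt
  have htt : t * t = 1 := ht.mul_self
  have hti : t⁻¹ = t := ht.inv
  obtain ⟨v, i, htv⟩ := ht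
  obtain ⟨ρ, hρ⟩ := cs.wordProd_surjective v
  have hpal : cs.wordProd (ρ ++ ([i] ++ ρ.reverse)) = t := by
    rw [cs.wordProd_append, cs.wordProd_append, cs.wordProd_reverse, htv, hρ]
    simp [mul_assoc]
  obtain ⟨ω', hred', hω'⟩ := cs.exists_reduced_word' (w * t)
  have h1 : cs.wordProd (ω' ++ (ρ ++ ([i] ++ ρ.reverse))) = w := by
    rw [cs.wordProd_append, hpal, ← hω', mul_assoc, htt, mul_one]
  have hcnt1 : cnt t (cs.rightInvSeq (ω' ++ (ρ ++ ([i] ++ ρ.reverse)))) = 1 := by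
    rw [rightInvSeq_append, cnt_append]
    have hz : cnt t ((cs.rightInvSeq ω').map
        (fun z => (cs.wordProd (ρ ++ ([i] ++ ρ.reverse)))⁻¹ * z
          * cs.wordProd (ρ ++ ([i] ++ ρ.reverse)))) = cnt t (cs.rightInvSeq ω') := by
      apply cnt_map
      intro z
      rw [hpal]
      constructor
      · intro h
        have h2 := congrArg (fun y => t * y * t⁻¹) h
        rw [show t * (t⁻¹ * z * t) * t⁻¹ = z by group] at h2
        rw [h2, show t * t * t⁻¹ = (t * t) * t⁻¹ from rfl, htt, one_mul, hti]
      · intro h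
        rw [h, hti]
        rw [show t * t * t = (t * t) * t from rfl, htt, one_mul]
    rw [hz]
    have hnot : t ∉ cs.rightInvSeq ω' := by
      intro hmem
      have hri := cs.isRightInversion_of_mem_rightInvSeq hred' hmem
      rw [← hω'] at hri
      have h2 := hri.2
      rw [mul_assoc, htt, mul_one] at h2
      omega
    rw [cnt_eq_zero_of_not_mem hnot]
    have h3 : t = cs.wordProd ρ * cs.simple i * (cs.wordProd ρ)⁻¹ := by rw [htv, hρ]
    rw [h3, cnt_pal]
    simp
  intro ω hω
  have hcnt : cnt t (cs.rightInvSeq ω) = 1 := by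
    have heq := cnt_ris_invariant cs
      (show cs.wordProd ω = cs.wordProd (ω' ++ (ρ ++ ([i] ++ ρ.reverse))) by rw [hω, h1]) t
    rw [heq]
    exact hcnt1
  have hmem : t ∈ cs.rightInvSeq ω := mem_of_cnt_eq_one hcnt
  obtain ⟨j, hj, hjt⟩ := List.mem_iff_getElem.mp hmem
  have hj' : j < ω.length := by
    rw [cs.length_rightInvSeq] at hj
    exact hj
  refine ⟨ω.eraseIdx j, List.eraseIdx_sublist ω j, List.length_eraseIdx_add_one hj', ?_⟩
  rw [← hω, ← cs.wordProd_mul_getD_rightInvSeq ω j]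
  rw [List.getD_eq_getElem _ _ hj, hjt]

/-- Strong exchange property, left version. -/
theorem strong_exchange_left {w t : W} (hwt : cs.IsLeftInversion w t) :
    ∀ ω : List B, cs.wordProd ω = w →
      ∃ η, η <+ ω ∧ η.length + 1 = ω.length ∧ t * w = cs.wordProd η := by
  intro ω hω
  have hinv : cs.IsRightInversion w⁻¹ t := cs.isRightInversion_inv_iff.mpr hwt
  obtain ⟨η, hsub, hlen, heq⟩ := strong_exchange_right cs hinv ω.reverse
    (by rw [cs.wordProd_reverse, hω])
  refine ⟨η.reverse, ?_, by simpa using hlen, ?_⟩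
  · have h2 := hsub.reverse
    simpa using h2
  · have h2 := congrArg (fun z : W => z⁻¹) heq
    rw [← cs.wordProd_reverse, mul_inv_rev, inv_inv] at h2
    rw [← h2, hwt.1.inv]

/-! ### Deletion to a reduced sublist -/

theorem shorten_aux : ∀ n : ℕ, ∀ ω : List B, ω.length ≤ n →
    ∃ η, η <+ ω ∧ cs.IsReduced η ∧ cs.wordProd η = cs.wordProd ω := by
  intro n
  induction n with
  | zero =>
    intro ω hω
    have : ω = [] := List.eq_nil_of_length_eq_zero (Nat.le_zero.mp hω)
    subst this
    exact ⟨[], List.Sublist.refl _, by simp [CoxeterSystem.IsReduced], rfl⟩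
  | succ n ih =>
    intro ω hω
    by_cases hred : cs.IsReduced ω
    · exact ⟨ω, List.Sublist.refl _, hred, rfl⟩
    · have hex : ∃ m, ¬ cs.IsReduced (ω.take m) := ⟨ω.length, by rwa [List.take_length]⟩
      set k₀ := Nat.find hex with hk₀
      have hk₀spec : ¬ cs.IsReduced (ω.take k₀) := Nat.find_spec hex
      have hk₀pos : 1 ≤ k₀ := by
        rcases Nat.eq_zero_or_pos k₀ with h0 | h1
        · exfalso
          apply hk₀spec
          rw [h0]
          simp [CoxeterSystem.IsReduced]
        · exact h1
      have hk₀le : k₀ ≤ ω.length := Nat.find_le (by rwa [List.take_length])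
      set k := k₀ - 1 with hk
      have hkk : k + 1 = k₀ := by omega
      have hkred : cs.IsReduced (ω.take k) := by
        have := Nat.find_min hex (show k < k₀ by omega)
        exact not_not.mp this
      have hklt : k < ω.length := by omega
      obtain ⟨b, hb⟩ : ∃ b, ω[k]? = some b := by
        rw [List.getElem?_eq_getElem hklt]
        exact ⟨_, rfl⟩
      have htake : ω.take k₀ = ω.take k ++ [b] := by
        rw [← hkk, List.take_succ]
        rw [hb]
        rfl
      have hw1len : cs.length (cs.wordProd (ω.take k)) = k := by
        have := hkred
        rw [CoxeterSystem.IsReduced] at this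
        rw [this, List.length_take]
        omega
      have hdown : cs.length (cs.wordProd (ω.take k) * cs.simple b) + 1
          = cs.length (cs.wordProd (ω.take k)) := by
        rcases cs.length_mul_simple (cs.wordProd (ω.take k)) b with h | h
        · exfalso
          apply hk₀spec
          rw [CoxeterSystem.IsReduced, htake, cs.wordProd_append, cs.wordProd_singleton, h,
            hw1len]
          simp
          omega
        · exact h
      have hinv : cs.IsRightInversion (cs.wordProd (ω.take k)) (cs.simple b) :=
        ⟨cs.isReflection_simple b, by omega⟩
      obtain ⟨η₁, hsub₁, hlen₁, heq₁⟩ := strong_exchange_right cs hinv (ω.take k) rfl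
      have hωsplit : ω = ω.take k₀ ++ ω.drop k₀ := (List.take_append_drop k₀ ω).symm
      have hprod : cs.wordProd ω = cs.wordProd (η₁ ++ ω.drop k₀) := by
        conv_lhs => rw [hωsplit]
        rw [cs.wordProd_append, cs.wordProd_append, htake, cs.wordProd_append,
          cs.wordProd_singleton, ← heq₁]
      have hsub : η₁ ++ ω.drop k₀ <+ ω := by
        conv_rhs => rw [hωsplit]
        apply List.Sublist.append _ (List.Sublist.refl _)
        calc η₁ <+ ω.take k := hsub₁
          _ <+ ω.take k₀ := by rw [htake]; exact (List.sublist_append_left _ _)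
      have hlen : (η₁ ++ ω.drop k₀).length ≤ n := by
        rw [List.length_append, List.length_take] at *
        rw [List.length_drop]
        omega
      obtain ⟨η, hs, hr, hp⟩ := ih (η₁ ++ ω.drop k₀) hlen
      exact ⟨η, hs.trans hsub, hr, by rw [hp, ← hprod]⟩

theorem shorten (ω : List B) :
    ∃ η, η <+ ω ∧ cs.IsReduced η ∧ cs.wordProd η = cs.wordProd ω :=
  shorten_aux cs ω.length ω le_rfl

/-! ### Bruhat order basics -/

theorem le_refl' (u : W) : BruhatLE cs u u := Relation.ReflTransGen.refl

theorem le_trans' {u v w : W} (h1 : BruhatLE cs u v) (h2 : BruhatLE cs v w) :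
    BruhatLE cs u w := Relation.ReflTransGen.trans h1 h2

theorem length_le_of_le {u v : W} (h : BruhatLE cs u v) : cs.length u ≤ cs.length v := by
  induction h with
  | refl => exact le_rfl
  | tail h1 h2 ih =>
    obtain ⟨t, _, _, hlt⟩ := h2
    omega

theorem eq_of_le_of_length_ge {u v : W} (h : BruhatLE cs u v)
    (hlen : cs.length v ≤ cs.length u) : u = v := by
  rcases Relation.ReflTransGen.cases_head h with rfl | ⟨z, hz, hzv⟩
  · rfl
  · obtain ⟨t, _, _, hlt⟩ := hz
    have := length_le_of_le cs hzv
    omega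

theorem cover_reflection {u v : W} (h : BruhatLE cs u v)
    (hlen : cs.length v = cs.length u + 1) :
    ∃ t, cs.IsReflection t ∧ v = t * u := by
  rcases Relation.ReflTransGen.cases_head h with rfl | ⟨z, hz, hzv⟩
  · omega
  · obtain ⟨t, ht, hzu, hlt⟩ := hz
    have h1 := length_le_of_le cs hzv
    have h2 : z = v := eq_of_le_of_length_ge cs hzv (by omega)
    subst h2
    exact ⟨t, ht, hzu⟩

theorem step_left {u : W} (i : B) (h : cs.length u < cs.length (cs.simple i * u)) :
    BruhatLE cs u (cs.simple i * u) :=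
  Relation.ReflTransGen.single ⟨cs.simple i, cs.isReflection_simple i, rfl, h⟩

theorem step_right {u : W} (j : B) (h : cs.length u < cs.length (u * cs.simple j)) :
    BruhatLE cs u (u * cs.simple j) := by
  refine Relation.ReflTransGen.single ⟨u * cs.simple j * u⁻¹,
    (cs.isReflection_simple j).conj u, ?_, h⟩
  group

theorem le_inv {u v : W} (h : BruhatLE cs u v) : BruhatLE cs u⁻¹ v⁻¹ := by
  induction h with
  | refl => exact Relation.ReflTransGen.refl
  | @tail b c h1 h2 ih =>
    obtain ⟨t, ht, heq, hlt⟩ := h2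
    refine Relation.ReflTransGen.tail ih ⟨b⁻¹ * t * b, ?_, ?_, ?_⟩
    · have := ht.conj b⁻¹
      simpa using this
    · rw [heq, show b⁻¹ * t * b * b⁻¹ = b⁻¹ * t from by group, mul_inv_rev, ht.inv]
    · rwa [cs.length_inv, cs.length_inv]

theorem erase_le {ω : List B} (hred : cs.IsReduced ω) (j : ℕ) :
    BruhatLE cs (cs.wordProd (ω.eraseIdx j)) (cs.wordProd ω) := by
  by_cases hj : j < ω.length
  · set t := (cs.leftInvSeq ω).getD j 1 with htdef
    have h1 : t * cs.wordProd ω = cs.wordProd (ω.eraseIdx j) :=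
      cs.getD_leftInvSeq_mul_wordProd ω j
    have hmem : t ∈ cs.leftInvSeq ω := by
      rw [htdef, List.getD_eq_getElem _ _ (by rwa [cs.length_leftInvSeq])]
      exact List.getElem_mem _
    have ht : cs.IsReflection t := cs.isReflection_of_mem_leftInvSeq ω hmem
    have heq : cs.wordProd ω = t * cs.wordProd (ω.eraseIdx j) := by
      rw [← h1, ← mul_assoc, ht.mul_self, one_mul]
    have hlen : cs.length (cs.wordProd (ω.eraseIdx j)) < cs.length (cs.wordProd ω) := by
      calc cs.length (cs.wordProd (ω.eraseIdx j)) ≤ (ω.eraseIdx j).length :=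
            cs.length_wordProd_le _
        _ < ω.length := by
            rw [← List.length_eraseIdx_add_one hj]
            omega
        _ = cs.length (cs.wordProd ω) := hred.symm
    exact Relation.ReflTransGen.single ⟨t, ht, heq, hlen⟩
  · rw [List.eraseIdx_of_length_le (by omega)]
    exact le_refl' cs _

theorem take_le {ω : List B} (hred : cs.IsReduced ω) (n : ℕ) :
    BruhatLE cs (cs.wordProd (ω.take n)) (cs.wordProd ω) := by
  have hstep : ∀ m : ℕ, BruhatLE cs (cs.wordProd (ω.take m)) (cs.wordProd (ω.take (m+1))) := by
    intro m
    have he : (ω.take (m+1)).eraseIdx m = ω.take m := by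
      rw [List.eraseIdx_eq_take_drop_succ, List.take_take]
      have h2 : (ω.take (m+1)).drop (m+1) = [] := by
        apply List.drop_eq_nil_of_le
        rw [List.length_take]
        omega
      rw [h2, List.append_nil]
      congr 1
      omega
    have := erase_le cs (CoxeterSystem.IsReduced.take hred (m+1)) (j := m)
    rwa [he] at this
  have hchain : ∀ m : ℕ, n ≤ m → BruhatLE cs (cs.wordProd (ω.take n)) (cs.wordProd (ω.take m)) := by
    intro m hm
    induction m, hm using Nat.le_induction with
    | base => exact le_refl' cs _
    | succ m hm ih => exact le_trans' cs ih (hstep m)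
  by_cases hn : n ≤ ω.length
  · have := hchain ω.length hn
    rwa [List.take_length] at this
  · rw [List.take_of_length_le (by omega)]
    exact le_refl' cs _

theorem simple_le_of_left_descent {z : W} {i : B}
    (h : cs.length (cs.simple i * z) < cs.length z) : BruhatLE cs (cs.simple i) z := by
  obtain ⟨μ, hμred, hμ⟩ := cs.exists_reduced_word' (cs.simple i * z)
  have hlen : cs.length (cs.simple i * z) + 1 = cs.length z := by
    rcases cs.length_simple_mul z i with h1 | h1 <;> omega
  have hred : cs.IsReduced (i :: μ) := by
    have h5 : μ.length = cs.length (cs.simple i * z) := by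
      rw [CoxeterSystem.IsReduced] at hμred
      rw [← hμred, ← hμ]
    rw [CoxeterSystem.IsReduced, cs.wordProd_cons, ← hμ, ← mul_assoc,
      cs.simple_mul_simple_self, one_mul, List.length_cons]
    omega
  have hz : cs.wordProd (i :: μ) = z := by
    rw [cs.wordProd_cons, ← hμ, ← mul_assoc, cs.simple_mul_simple_self, one_mul]
  have := take_le cs hred 1
  rw [hz] at this
  simpa using this

theorem simple_le_of_right_descent {z : W} {j : B}
    (h : cs.length (z * cs.simple j) < cs.length z) : BruhatLE cs (cs.simple j) z := by
  have h2 : cs.length (cs.simple j * z⁻¹) < cs.length z⁻¹ := by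
    rw [← cs.length_inv (cs.simple j * z⁻¹)]
    simp only [mul_inv_rev, inv_inv, inv_simple]
    rwa [cs.length_inv z]
  have h3 := simple_le_of_left_descent cs h2
  have h4 := le_inv cs h3
  simpa using h4

theorem simple_le_of_mem {ω : List B} (hred : cs.IsReduced ω) {i : B} (hmem : i ∈ ω) :
    BruhatLE cs (cs.simple i) (cs.wordProd ω) := by
  induction ω with
  | nil => simp at hmem
  | cons a ω ih =>
    have hredtail : cs.IsReduced ω := by
      have := CoxeterSystem.IsReduced.drop hred (j := 1)
      simpa using this
    rw [CoxeterSystem.IsReduced] at hred hredtail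
    rcases List.mem_cons.mp hmem with rfl | hmem'
    · apply simple_le_of_left_descent
      have hz : cs.simple i * cs.wordProd (i :: ω) = cs.wordProd ω := by
        rw [cs.wordProd_cons, ← mul_assoc, cs.simple_mul_simple_self, one_mul]
      rw [hz, hred, hredtail]
      simp
    · refine le_trans' cs (ih hredtail hmem') ?_
      rw [cs.wordProd_cons]
      apply step_left
      rw [← cs.wordProd_cons, hred, hredtail]
      simp

/-- Subword property, necessary direction. -/
theorem subword_of_le {u v : W} (h : BruhatLE cs u v) :
    ∀ Ω : List B, cs.IsReduced Ω → cs.wordProd Ω = v →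
      ∃ η, η <+ Ω ∧ cs.IsReduced η ∧ cs.wordProd η = u := by
  induction h using Relation.ReflTransGen.head_induction_on with
  | refl =>
    intro Ω hred hΩ
    exact ⟨Ω, List.Sublist.refl _, hred, hΩ⟩
  | head hstep htail ih =>
    rename_i a c
    intro Ω hred hΩ
    obtain ⟨ζ, hζsub, hζred, hζ⟩ := ih Ω hred hΩ
    obtain ⟨t, ht, hca, hlt⟩ := hstep
    have hinv : cs.IsLeftInversion c t := by
      refine ⟨ht, ?_⟩
      rw [hca, ← mul_assoc, ht.mul_self, one_mul]
      rwa [← hca]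
    obtain ⟨η₀, hη₀sub, _, hη₀⟩ := strong_exchange_left cs hinv ζ hζ
    obtain ⟨η, hηsub, hηred, hη⟩ := shorten cs η₀
    refine ⟨η, (hηsub.trans hη₀sub).trans hζsub, hηred, ?_⟩
    rw [hη, ← hη₀, hca, ← mul_assoc, ht.mul_self, one_mul]

theorem sublist_eraseIdx : ∀ {l η : List B}, η <+ l → η.length + 1 = l.length →
    ∃ k, η = l.eraseIdx k := by
  intro l
  induction l with
  | nil =>
    intro η h hlen
    simp at hlen
  | cons a l ih =>
    intro η hsub hlen
    cases hsub with
    | cons _ h =>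
      have hl : η.length = l.length := by
        simp only [List.length_cons] at hlen
        omega
      rw [h.eq_of_length hl]
      exact ⟨0, rfl⟩
    | cons_cons _ h =>
      rename_i η'
      obtain ⟨k, hk⟩ := ih h (by simpa using hlen)
      exact ⟨k + 1, by rw [List.eraseIdx_cons_succ, hk]⟩

/-! ### Parabolic subgroups -/

theorem simple_mem_parabolic {I : Set B} {i : B} (hi : i ∈ I) :
    cs.simple i ∈ parabolic cs I :=
  Subgroup.subset_closure (Set.mem_image_of_mem _ hi)

theorem wordProd_mem_parabolic {I : Set B} {α : List B} (hα : ∀ a ∈ α, a ∈ I) :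
    cs.wordProd α ∈ parabolic cs I := by
  induction α with
  | nil => simpa [cs.wordProd_nil] using (parabolic cs I).one_mem
  | cons a α ih =>
    rw [cs.wordProd_cons]
    exact (parabolic cs I).mul_mem (simple_mem_parabolic cs (hα a (by simp)))
      (ih fun b hb => hα b (by simp [hb]))

theorem exists_word_of_mem_parabolic {I : Set B} {g : W} (h : g ∈ parabolic cs I) :
    ∃ α : List B, (∀ a ∈ α, a ∈ I) ∧ cs.wordProd α = g := by
  induction h using Subgroup.closure_induction with
  | mem x hx =>
    obtain ⟨i, hi, rfl⟩ := hx
    exact ⟨[i], by simpa using hi, by simp⟩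
  | one => exact ⟨[], by simp, by simp⟩
  | mul x y hx hy ihx ihy =>
    obtain ⟨α, hα, hπα⟩ := ihx
    obtain ⟨β, hβ, hπβ⟩ := ihy
    refine ⟨α ++ β, ?_, by rw [cs.wordProd_append, hπα, hπβ]⟩
    intro a ha
    rcases List.mem_append.mp ha with h | h
    exacts [hα a h, hβ a h]
  | inv x hx ihx =>
    obtain ⟨α, hα, hπα⟩ := ihx
    exact ⟨α.reverse, fun a ha => hα a (List.mem_reverse.mp ha),
      by rw [cs.wordProd_reverse, hπα]⟩

theorem exists_reduced_word_of_mem_parabolic {I : Set B} {g : W} (h : g ∈ parabolic cs I) :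
    ∃ α : List B, (∀ a ∈ α, a ∈ I) ∧ cs.IsReduced α ∧ cs.wordProd α = g := by
  obtain ⟨α, hα, hπα⟩ := exists_word_of_mem_parabolic cs h
  obtain ⟨η, hsub, hred, hπη⟩ := shorten cs α
  exact ⟨η, fun a ha => hα a (hsub.subset ha), hred, by rw [hπη, hπα]⟩

theorem peel_right {J : Set B} {y : W} (hy : y ∈ parabolic cs J) (hne : y ≠ 1) :
    ∃ (α : List B) (j : B), (∀ a ∈ α, a ∈ J) ∧ j ∈ J ∧
      cs.IsReduced (α ++ [j]) ∧ cs.wordProd (α ++ [j]) = y := by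
  obtain ⟨β, hβ, hred, hπ⟩ := exists_reduced_word_of_mem_parabolic cs hy
  rcases List.eq_nil_or_concat' β with rfl | ⟨α, j, rfl⟩
  · exact absurd (by rw [← hπ, cs.wordProd_nil]) (Ne.symm hne)
  · exact ⟨α, j, fun a ha => hβ a (by simp [ha]), hβ j (by simp), hred, hπ⟩

/-! ### One-sided minimality and additivity -/

/-- `z` has no left descent in `I`. -/
def IRed (I : Set B) (z : W) : Prop := ∀ i ∈ I, cs.length z ≤ cs.length (cs.simple i * z)

/-- `z` has no right descent in `J`. -/
def JRed (J : Set B) (z : W) : Prop := ∀ j ∈ J, cs.length z ≤ cs.length (z * cs.simple j)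

/-- Additivity of lengths on a right coset with minimal representative `d`. -/
theorem min_right_additive {J : Set B} {d : W}
    (hd : ∀ y ∈ parabolic cs J, cs.length d ≤ cs.length (d * y)) :
    ∀ y ∈ parabolic cs J, cs.length (d * y) = cs.length d + cs.length y := by
  suffices H : ∀ n : ℕ, ∀ y ∈ parabolic cs J, cs.length y ≤ n →
      cs.length (d * y) = cs.length d + cs.length y by
    intro y hy
    exact H (cs.length y) y hy le_rfl
  intro n
  induction n with
  | zero =>
    intro y hy hn
    have h1 : y = 1 := cs.length_eq_zero_iff.mp (Nat.le_zero.mp hn)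
    subst h1
    simp
  | succ n ih =>
    intro y hy hn
    by_cases h1 : y = 1
    · subst h1; simp
    obtain ⟨α, j, hα, hj, hred, hπ⟩ := peel_right cs hy h1
    have hylen : cs.length y = α.length + 1 := by
      rw [← hπ, hred]
      simp
    have hy₁mem : cs.wordProd α ∈ parabolic cs J := wordProd_mem_parabolic cs hα
    have hy₁red : cs.IsReduced α := by
      have h2 := CoxeterSystem.IsReduced.take hred (α.length)
      rwa [List.take_left] at h2
    have hy₁len : cs.length (cs.wordProd α) = α.length := hy₁red
    have hz := ih (cs.wordProd α) hy₁mem (by omega)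
    rw [hy₁len] at hz
    have hysplit : y = cs.wordProd α * cs.simple j := by
      rw [← hπ, cs.wordProd_append, cs.wordProd_singleton]
    rcases cs.length_mul_simple (d * cs.wordProd α) j with hup | hdown
    · rw [hysplit, ← mul_assoc, hup, hz, ← hysplit, hylen]
      omega
    · exfalso
      have hinv : cs.IsRightInversion (d * cs.wordProd α) (cs.simple j) :=
        ⟨cs.isReflection_simple j, by omega⟩
      obtain ⟨δ, hδred, hδ⟩ := cs.exists_reduced_word' d
      have hword : cs.wordProd (δ ++ α) = d * cs.wordProd α := by
        rw [cs.wordProd_append, ← hδ]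
      obtain ⟨η, hsub, hlen, heq⟩ := strong_exchange_right cs hinv (δ ++ α) hword
      obtain ⟨η₁, η₂, rfl, hsub₁, hsub₂⟩ := List.sublist_append_iff.mp hsub
      have hl₁ : η₁.length ≤ δ.length := hsub₁.length_le
      have hl₂ : η₂.length ≤ α.length := hsub₂.length_le
      have hδlen : δ.length = cs.length d := by rw [← hδred, ← hδ]
      rw [List.length_append, List.length_append] at hlen
      rcases (show (η₁.length = δ.length ∧ η₂.length + 1 = α.length) ∨
          (η₁.length + 1 = δ.length ∧ η₂.length = α.length) by omega) with ⟨he1, he2⟩ | ⟨he1, he2⟩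
      · -- the erased letter is in α : contradicts reducedness of y
        rw [hsub₁.eq_of_length he1] at heq
        rw [cs.wordProd_append, ← hδ] at heq
        have h3 : cs.wordProd α * cs.simple j = cs.wordProd η₂ := by
          have h3' := heq
          rw [mul_assoc] at h3'
          exact mul_left_cancel h3'
        have h4 : cs.length (cs.wordProd α * cs.simple j) ≤ η₂.length :=
          h3 ▸ cs.length_wordProd_le η₂
        rw [← hysplit] at h4
        omega
      · -- the erased letter is in δ : contradicts minimality of d
        rw [hsub₂.eq_of_length he2] at heq
        have hy' : cs.wordProd α * cs.simple j * (cs.wordProd α)⁻¹ ∈ parabolic cs J := by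
          refine (parabolic cs J).mul_mem ((parabolic cs J).mul_mem hy₁mem
            (simple_mem_parabolic cs hj)) ((parabolic cs J).inv_mem hy₁mem)
        have h5 : d * (cs.wordProd α * cs.simple j * (cs.wordProd α)⁻¹)
            = cs.wordProd η₁ := by
          rw [cs.wordProd_append] at heq
          rw [show d * (cs.wordProd α * cs.simple j * (cs.wordProd α)⁻¹)
              = (d * cs.wordProd α * cs.simple j) * (cs.wordProd α)⁻¹ by group, heq]
          group
        have h6 := hd _ hy'
        rw [h5] at h6
        have h7 : cs.length (cs.wordProd η₁) ≤ η₁.length := cs.length_wordProd_le _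
        omega

/-- Additivity of lengths on a left coset with minimal representative `d`. -/
theorem min_left_additive {I : Set B} {d : W}
    (hd : ∀ x ∈ parabolic cs I, cs.length d ≤ cs.length (x * d)) :
    ∀ x ∈ parabolic cs I, cs.length (x * d) = cs.length x + cs.length d := by
  intro x hx
  have hd' : ∀ y ∈ parabolic cs I, cs.length d⁻¹ ≤ cs.length (d⁻¹ * y) := by
    intro y hy
    rw [cs.length_inv, show d⁻¹ * y = (y⁻¹ * d)⁻¹ by group, cs.length_inv]
    exact hd y⁻¹ ((parabolic cs I).inv_mem hy)
  have h := min_right_additive cs hd' x⁻¹ ((parabolic cs I).inv_mem hx)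
  rw [show d⁻¹ * x⁻¹ = (x * d)⁻¹ by group, cs.length_inv, cs.length_inv, cs.length_inv] at h
  omega

/-- A `J`-right-reduced element is minimal in its right coset. -/
theorem jred_min {J : Set B} {d : W} (hd : JRed cs J d) :
    ∀ y ∈ parabolic cs J, cs.length d ≤ cs.length (d * y) := by
  have hP : ∃ n, ∃ y, y ∈ parabolic cs J ∧ cs.length (d * y) = n :=
    ⟨cs.length d, 1, (parabolic cs J).one_mem, by simp⟩
  classical
  set n₀ := Nat.find hP with hn₀
  obtain ⟨y₀, hy₀mem, hy₀len⟩ := Nat.find_spec hP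
  have hmin : ∀ y ∈ parabolic cs J, n₀ ≤ cs.length (d * y) := by
    intro y hy
    exact Nat.find_min' hP ⟨y, hy, rfl⟩
  have hm : ∀ y ∈ parabolic cs J, cs.length (d * y₀) ≤ cs.length ((d * y₀) * y) := by
    intro y hy
    rw [hy₀len, mul_assoc]
    exact hmin _ ((parabolic cs J).mul_mem hy₀mem hy)
  have hadd := min_right_additive cs hm
  by_cases h1 : y₀ = 1
  · subst h1
    intro y hy
    rw [mul_one] at hy₀len
    rw [hy₀len]
    exact hmin y hy
  · exfalso
    obtain ⟨α, j, hα, hj, hred, hπ⟩ := peel_right cs ((parabolic cs J).inv_mem hy₀mem)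
      (by simpa using h1)
    have hc₁mem : cs.wordProd α ∈ parabolic cs J := wordProd_mem_parabolic cs hα
    have hc₁red : cs.IsReduced α := by
      have h2 := CoxeterSystem.IsReduced.take hred (α.length)
      rwa [List.take_left] at h2
    have hy₀inv : y₀⁻¹ = cs.wordProd α * cs.simple j := by
      rw [← hπ, cs.wordProd_append, cs.wordProd_singleton]
    have hdd : d = (d * y₀) * (cs.wordProd α * cs.simple j) := by
      rw [← hy₀inv]
      group
    have hd1 := hadd y₀⁻¹ ((parabolic cs J).inv_mem hy₀mem)
    have hlin : cs.length y₀⁻¹ = α.length + 1 := by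
      rw [← hπ, hred]
      simp
    have hd2 := hadd (cs.wordProd α) hc₁mem
    have hc₁len : cs.length (cs.wordProd α) = α.length := hc₁red
    -- d * s j shortens d
    have hds : d * cs.simple j = (d * y₀) * cs.wordProd α := by
      have hy₀ : y₀ = cs.simple j * (cs.wordProd α)⁻¹ := by
        have h9 := congrArg (fun z : W => z⁻¹) hy₀inv
        simpa [mul_inv_rev] using h9
      rw [hy₀]
      group
    have h8 := hd j hj
    rw [hds, hd2, hc₁len] at h8
    rw [show d * y₀ * y₀⁻¹ = d by group, hlin] at hd1
    omega

/-- An `I`-left-reduced element is minimal in its left coset. -/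
theorem ired_min {I : Set B} {d : W} (hd : IRed cs I d) :
    ∀ x ∈ parabolic cs I, cs.length d ≤ cs.length (x * d) := by
  have hd' : JRed cs I d⁻¹ := by
    intro i hi
    rw [cs.length_inv, show d⁻¹ * cs.simple i = (cs.simple i * d)⁻¹ by
      rw [mul_inv_rev, inv_simple], cs.length_inv]
    exact hd i hi
  intro x hx
  have h := jred_min cs hd' x⁻¹ ((parabolic cs I).inv_mem hx)
  rwa [cs.length_inv, show d⁻¹ * x⁻¹ = (x * d)⁻¹ by group, cs.length_inv] at h

/-! ### The dichotomy for multiplying a `J`-reduced element by a simple reflection -/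

theorem jred_of_lt {J : Set B} {m : W} {i : B} (hm : JRed cs J m)
    (h : cs.length (cs.simple i * m) < cs.length m) : JRed cs J (cs.simple i * m) := by
  intro j hj
  by_contra h2
  push_neg at h2
  have e : m * cs.simple j = cs.simple i * (cs.simple i * m * cs.simple j) := by
    rw [show cs.simple i * (cs.simple i * m * cs.simple j)
        = (cs.simple i * cs.simple i) * (m * cs.simple j) by group,
      cs.simple_mul_simple_self, one_mul]
  have hb := cs.length_simple_mul (cs.simple i * m * cs.simple j) i
  have hc := hm j hj
  rw [e] at hc
  omega

theorem exchange_dichotomy {J : Set B} {m : W} (hm : JRed cs J m) (i : B)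
    (hup : cs.length m < cs.length (cs.simple i * m)) :
    JRed cs J (cs.simple i * m) ∨ ∃ j ∈ J, cs.simple i * m = m * cs.simple j := by
  by_cases hj : JRed cs J (cs.simple i * m)
  · exact Or.inl hj
  right
  simp only [JRed, not_forall, not_le] at hj
  obtain ⟨j, hjJ, hlt⟩ := hj
  have hinv : cs.IsRightInversion (cs.simple i * m) (cs.simple j) :=
    ⟨cs.isReflection_simple j, hlt⟩
  obtain ⟨μ, hμred, hμ⟩ := cs.exists_reduced_word' m
  have hword : cs.wordProd (i :: μ) = cs.simple i * m := by
    rw [cs.wordProd_cons, ← hμ]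
  obtain ⟨η, hsub, hlen, heq⟩ := strong_exchange_right cs hinv (i :: μ) hword
  cases hsub with
  | cons _ h =>
    have hl : η.length = μ.length := by
      simp only [List.length_cons] at hlen
      omega
    rw [h.eq_of_length hl, ← hμ] at heq
    have h2 := congrArg (fun z : W => z * cs.simple j) heq
    rw [show cs.simple i * m * cs.simple j * cs.simple j
        = cs.simple i * m * (cs.simple j * cs.simple j) by group,
      cs.simple_mul_simple_self, mul_one] at h2
    exact ⟨j, hjJ, h2⟩
  | cons_cons _ h =>
    rename_i η'
    exfalso
    rw [cs.wordProd_cons] at heq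
    have h3 : m * cs.simple j = cs.wordProd η' := by
      rw [mul_assoc] at heq
      exact mul_left_cancel heq
    have h4 : cs.length (m * cs.simple j) ≤ η'.length := h3 ▸ cs.length_wordProd_le η'
    have h5 : η'.length + 1 = μ.length := by
      simp only [List.length_cons] at hlen
      omega
    have h6 : cs.length m = μ.length := by rw [← hμred, ← hμ]
    have h7 := hm j hjJ
    omega

/-- Projecting `x * n` to a `J`-reduced representative of its right coset, staying in `W_I n`. -/
theorem proj_coset {I J : Set B} {n : W} (hn : JRed cs J n) :
    ∀ α : List B, (∀ a ∈ α, a ∈ I) →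
      ∃ x y, x ∈ parabolic cs I ∧ y ∈ parabolic cs J ∧ JRed cs J (x * n) ∧
        cs.wordProd α * n = x * n * y := by
  intro α
  induction α with
  | nil =>
    intro _
    exact ⟨1, 1, (parabolic cs I).one_mem, (parabolic cs J).one_mem,
      by simpa using hn, by simp⟩
  | cons i α ih =>
    intro hα
    obtain ⟨x, y, hx, hy, hJ, heq⟩ := ih (fun a ha => hα a (by simp [ha]))
    have hmem : cs.simple i * x ∈ parabolic cs I :=
      (parabolic cs I).mul_mem (simple_mem_parabolic cs (hα i (by simp))) hx
    rcases lt_trichotomy (cs.length (cs.simple i * (x * n))) (cs.length (x * n))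
      with hlt | heqq | hgt
    · refine ⟨cs.simple i * x, y, hmem, hy, ?_, ?_⟩
      · have h2 := jred_of_lt cs hJ hlt
        rwa [← mul_assoc] at h2
      · rw [cs.wordProd_cons, mul_assoc, heq]
        group
    · exact absurd heqq (cs.length_simple_mul_ne (x * n) i)
    · rcases exchange_dichotomy cs hJ i hgt with hJ' | ⟨j, hjJ, hswap⟩
      · refine ⟨cs.simple i * x, y, hmem, hy, ?_, ?_⟩
        · rwa [← mul_assoc] at hJ'
        · rw [cs.wordProd_cons, mul_assoc, heq]
          group
      · refine ⟨x, cs.simple j * y, hx, (parabolic cs J).mul_mem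
          (simple_mem_parabolic cs hjJ) hy, hJ, ?_⟩
        rw [cs.wordProd_cons, mul_assoc, heq,
          show cs.simple i * (x * n * y) = (cs.simple i * (x * n)) * y by group, hswap]
        group

/-- A bireduced element is minimal in its double coset. -/
theorem bireduced_min {I J : Set B} {m : W} (hI : IRed cs I m) (hJ : JRed cs J m) :
    ∀ z ∈ doubleCoset cs I J m, cs.length m ≤ cs.length z := by
  rintro z ⟨x, hx, y, hy, rfl⟩
  obtain ⟨α, hα, hπα⟩ := exists_word_of_mem_parabolic cs hx
  obtain ⟨x', y', hx', hy', hJ', heq⟩ := proj_coset cs hJ α hα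
  rw [hπα] at heq
  have h1 : x * m * y = (x' * m) * (y' * y) := by
    rw [show (x' * m) * (y' * y) = (x' * m * y') * y by group, ← heq]
  rw [h1]
  have h2 := jred_min cs hJ' (y' * y) ((parabolic cs J).mul_mem hy' hy)
  have h3 := ired_min cs hI x' hx'
  omega

theorem jred_unique {J : Set B} {z z' y : W} (hz : JRed cs J z) (hz' : JRed cs J z')
    (hy : y ∈ parabolic cs J) (he : z' = z * y) : z' = z := by
  have h1 := min_right_additive cs (jred_min cs hz) y hy
  have h2 := min_right_additive cs (jred_min cs hz') y⁻¹ ((parabolic cs J).inv_mem hy)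
  rw [he, show z * y * y⁻¹ = z by group, cs.length_inv] at h2
  have h3 : cs.length y = 0 := by omega
  rw [he, cs.length_eq_zero_iff.mp h3, mul_one]

theorem ired_unique {I : Set B} {z z' x : W} (hz : IRed cs I z) (hz' : IRed cs I z')
    (hx : x ∈ parabolic cs I) (he : z' = x * z) : z' = z := by
  have h1 := min_left_additive cs (ired_min cs hz) x hx
  have h2 := min_left_additive cs (ired_min cs hz') x⁻¹ ((parabolic cs I).inv_mem hx)
  rw [he, show x⁻¹ * (x * z) = z by group, cs.length_inv] at h2
  have h3 : cs.length x = 0 := by omega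
  rw [he, cs.length_eq_zero_iff.mp h3, one_mul]

/-- Uniqueness of the bireduced element of a double coset. -/
theorem bireduced_unique {I J : Set B} {m₁ m₂ : W}
    (h1I : IRed cs I m₁) (h1J : JRed cs J m₁) (h2I : IRed cs I m₂) (h2J : JRed cs J m₂)
    (hmem : m₂ ∈ doubleCoset cs I J m₁) : m₂ = m₁ := by
  obtain ⟨x, hx, y, hy, heq⟩ := hmem
  obtain ⟨α, hα, hπα⟩ := exists_word_of_mem_parabolic cs hx
  obtain ⟨x', y', hx', hy', hJ', heq'⟩ := proj_coset cs h1J α hα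
  rw [hπα] at heq'
  have h1 : m₂ = (x' * m₁) * (y' * y) := by
    rw [heq, show (x' * m₁) * (y' * y) = (x' * m₁ * y') * y by group, ← heq']
  have h2 : m₂ = x' * m₁ :=
    jred_unique cs hJ' h2J ((parabolic cs J).mul_mem hy' hy) h1
  exact ired_unique cs h1I h2I hx' h2

/-! ### Double coset generalities -/

theorem mem_doubleCoset_self (I J : Set B) (u : W) : u ∈ doubleCoset cs I J u :=
  ⟨1, (parabolic cs I).one_mem, 1, (parabolic cs J).one_mem, by simp⟩

theorem mem_doubleCoset_of {I J : Set B} {v x y : W} (hx : x ∈ parabolic cs I)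
    (hy : y ∈ parabolic cs J) : x * v * y ∈ doubleCoset cs I J v :=
  ⟨x, hx, y, hy, rfl⟩

theorem doubleCoset_eq {I J : Set B} {v₁ v₂ x y : W} (hx : x ∈ parabolic cs I)
    (hy : y ∈ parabolic cs J) (he : v₂ = x * v₁ * y) :
    doubleCoset cs I J v₂ = doubleCoset cs I J v₁ := by
  ext z
  constructor
  · rintro ⟨a, ha, b, hb, rfl⟩
    exact ⟨a * x, (parabolic cs I).mul_mem ha hx, y * b, (parabolic cs J).mul_mem hy hb,
      by rw [he]; group⟩
  · rintro ⟨a, ha, b, hb, rfl⟩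
    refine ⟨a * x⁻¹, (parabolic cs I).mul_mem ha ((parabolic cs I).inv_mem hx),
      y⁻¹ * b, (parabolic cs J).mul_mem ((parabolic cs J).inv_mem hy) hb, ?_⟩
    rw [he]
    group

/-! ### The structure decomposition -/

theorem struct (I J : Set B) : ∀ v : W,
    ∃ ξ Pm υ : List B, (∀ a ∈ ξ, a ∈ I) ∧ (∀ a ∈ υ, a ∈ J) ∧
      cs.IsReduced (ξ ++ Pm ++ υ) ∧ cs.wordProd (ξ ++ Pm ++ υ) = v ∧
      IRed cs I (cs.wordProd Pm) ∧ JRed cs J (cs.wordProd Pm) ∧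
      BruhatLE cs (cs.wordProd Pm) v := by
  suffices H : ∀ n, ∀ v : W, cs.length v ≤ n →
      ∃ ξ Pm υ : List B, (∀ a ∈ ξ, a ∈ I) ∧ (∀ a ∈ υ, a ∈ J) ∧
        cs.IsReduced (ξ ++ Pm ++ υ) ∧ cs.wordProd (ξ ++ Pm ++ υ) = v ∧
        IRed cs I (cs.wordProd Pm) ∧ JRed cs J (cs.wordProd Pm) ∧
        BruhatLE cs (cs.wordProd Pm) v by
    intro v
    exact H (cs.length v) v le_rfl
  intro n
  induction n with
  | zero =>
    intro v hv
    have h1 : v = 1 := cs.length_eq_zero_iff.mp (Nat.le_zero.mp hv)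
    subst h1
    refine ⟨[], [], [], by simp, by simp, ?_, by simp, ?_, ?_, ?_⟩
    · simp [CoxeterSystem.IsReduced]
    · intro i _
      simp
    · intro j _
      simp
    · simp only [cs.wordProd_nil]
      exact le_refl' cs 1
  | succ n ih =>
    intro v hv
    by_cases hI1 : ∃ i ∈ I, cs.length (cs.simple i * v) < cs.length v
    · obtain ⟨i, hiI, hlt⟩ := hI1
      have hv₁ : cs.length (cs.simple i * v) + 1 = cs.length v := by
        rcases cs.length_simple_mul v i with h | h <;> omega
      obtain ⟨ξ, Pm, υ, hξ, hυ, hred, hπ, hIr, hJr, hle⟩ :=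
        ih (cs.simple i * v) (by omega)
      refine ⟨i :: ξ, Pm, υ, ?_, hυ, ?_, ?_, hIr, hJr, ?_⟩
      · intro a ha
        rcases List.mem_cons.mp ha with rfl | ha'
        exacts [hiI, hξ a ha']
      · rw [CoxeterSystem.IsReduced,
          show (i :: ξ) ++ Pm ++ υ = i :: (ξ ++ Pm ++ υ) from rfl,
          cs.wordProd_cons, hπ, show cs.simple i * (cs.simple i * v) = v by
            rw [← mul_assoc, cs.simple_mul_simple_self, one_mul]]
        rw [CoxeterSystem.IsReduced] at hred
        rw [hπ] at hred
        simp only [List.length_cons]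
        omega
      · rw [show (i :: ξ) ++ Pm ++ υ = i :: (ξ ++ Pm ++ υ) from rfl, cs.wordProd_cons, hπ,
          ← mul_assoc, cs.simple_mul_simple_self, one_mul]
      · refine le_trans' cs hle ?_
        have h2 := step_left cs i (u := cs.simple i * v) (by
          rw [← mul_assoc, cs.simple_mul_simple_self, one_mul]
          omega)
        rwa [← mul_assoc, cs.simple_mul_simple_self, one_mul] at h2
    · by_cases hJ1 : ∃ j ∈ J, cs.length (v * cs.simple j) < cs.length v
      · obtain ⟨j, hjJ, hlt⟩ := hJ1
        have hv₁ : cs.length (v * cs.simple j) + 1 = cs.length v := by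
          rcases cs.length_mul_simple v j with h | h <;> omega
        obtain ⟨ξ, Pm, υ, hξ, hυ, hred, hπ, hIr, hJr, hle⟩ :=
          ih (v * cs.simple j) (by omega)
        refine ⟨ξ, Pm, υ ++ [j], hξ, ?_, ?_, ?_, hIr, hJr, ?_⟩
        · intro a ha
          rcases List.mem_append.mp ha with ha' | ha'
          · exact hυ a ha'
          · simp only [List.mem_singleton] at ha'
            exact ha' ▸ hjJ
        · rw [CoxeterSystem.IsReduced,
            show ξ ++ Pm ++ (υ ++ [j]) = (ξ ++ Pm ++ υ) ++ [j] by simp,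
            cs.wordProd_append, hπ, cs.wordProd_singleton,
            show v * cs.simple j * cs.simple j = v by
              rw [mul_assoc, cs.simple_mul_simple_self, mul_one]]
          rw [CoxeterSystem.IsReduced] at hred
          rw [hπ] at hred
          rw [List.length_append (as := ξ ++ Pm ++ υ) (bs := [j])]
          simp only [List.length_singleton]
          omega
        · rw [show ξ ++ Pm ++ (υ ++ [j]) = (ξ ++ Pm ++ υ) ++ [j] by simp,
            cs.wordProd_append, hπ, cs.wordProd_singleton, mul_assoc,
            cs.simple_mul_simple_self, mul_one]
        · refine le_trans' cs hle ?_
          have h2 := step_right cs j (u := v * cs.simple j) (by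
            rw [mul_assoc, cs.simple_mul_simple_self, mul_one]
            omega)
          rwa [mul_assoc, cs.simple_mul_simple_self, mul_one] at h2
      · push_neg at hI1 hJ1
        obtain ⟨μ, hμred, hμ⟩ := cs.exists_reduced_word' v
        refine ⟨[], μ, [], by simp, by simp, ?_, ?_, ?_, ?_, ?_⟩
        · simpa using hμred
        · simp [← hμ]
        · intro i hi
          rw [← hμ]
          exact hI1 i hi
        · intro j hj
          rw [← hμ]
          exact hJ1 j hj
        · rw [← hμ]
          exact le_refl' cs v

/-! ### Minimal elements of Bruhat cosets are bireduced -/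

theorem min_of_bCoset_bired {w a p : W} (hp : p ∈ bCoset cs w a)
    (hmin : ∀ z ∈ bCoset cs w a, cs.length p ≤ cs.length z) :
    IRed cs (leftDescents cs w) p ∧ JRed cs (rightDescents cs w) p := by
  obtain ⟨x, hx, y, hy, rfl⟩ := hp
  constructor
  · intro i hi
    by_contra h
    push_neg at h
    have hmem : cs.simple i * (x * a * y) ∈ bCoset cs w a :=
      ⟨cs.simple i * x, (parabolic cs (leftDescents cs w)).mul_mem
        (simple_mem_parabolic cs hi) hx, y, hy, by group⟩
    have := hmin _ hmem
    omega
  · intro j hj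
    by_contra h
    push_neg at h
    have hmem : (x * a * y) * cs.simple j ∈ bCoset cs w a :=
      ⟨x, hx, y * cs.simple j, (parabolic cs (rightDescents cs w)).mul_mem hy
        (simple_mem_parabolic cs hj), by group⟩
    have := hmin _ hmem
    omega

end Aux

open Aux in
theorem separated_side_weakly_increasing' (cs : CoxeterSystem M W) (w pw u v pu pv : W)
    (hpw : pw ∈ bCoset cs w w)
    (hpw_min : ∀ x ∈ bCoset cs w w, cs.length pw ≤ cs.length x)
    (hsepL : leftDescents cs w ∩ support cs pw = ∅)
    (hsepR : rightDescents cs w ∩ support cs pw = ∅)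
    (hu : BruhatLE cs u w) (hv : BruhatLE cs v w)
    (huv : BruhatLE cs u v) (hcov : cs.length v = cs.length u + 1)
    (hpu : pu ∈ bCoset cs w u) (hpu_min : ∀ x ∈ bCoset cs w u, cs.length pu ≤ cs.length x)
    (hpv : pv ∈ bCoset cs w v) (hpv_min : ∀ x ∈ bCoset cs w v, cs.length pv ≤ cs.length x) :
    (bCoset cs w u = bCoset cs w v ∧
      cs.length v - cs.length pv = (cs.length u - cs.length pu) + 1) ∨
    (bCoset cs w u ≠ bCoset cs w v ∧
      cs.length u - cs.length pu = cs.length v - cs.length pv) := by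
  classical
  have hbc : ∀ z : W, bCoset cs w z
      = doubleCoset cs (leftDescents cs w) (rightDescents cs w) z := fun _ => rfl
  have hpu_le_u : cs.length pu ≤ cs.length u :=
    hpu_min u (mem_doubleCoset_self cs _ _ u)
  by_cases hc : bCoset cs w u = bCoset cs w v
  · left
    refine ⟨hc, ?_⟩
    have h1 : cs.length pv ≤ cs.length pu := hpv_min pu (hc ▸ hpu)
    have h2 : cs.length pu ≤ cs.length pv := hpu_min pv (by rw [hc]; exact hpv)
    omega
  · right
    refine ⟨hc, ?_⟩
    obtain ⟨t, ht, htu⟩ := cover_reflection cs huv hcov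
    -- pw is bireduced; identify it with the core of the structure decomposition of w
    have hpw_bired := min_of_bCoset_bired cs hpw hpw_min
    obtain ⟨Xi, Pw, Up, hXi, hUp, hredw, hπw, hIw, hJw, hlew⟩ :=
      struct cs (leftDescents cs w) (rightDescents cs w) w
    have hw_eq : w = cs.wordProd Xi * cs.wordProd Pw * cs.wordProd Up := by
      rw [← hπw, cs.wordProd_append, cs.wordProd_append]
    have hdcw : doubleCoset cs (leftDescents cs w) (rightDescents cs w) w
        = doubleCoset cs (leftDescents cs w) (rightDescents cs w) (cs.wordProd Pw) :=
      doubleCoset_eq cs (wordProd_mem_parabolic cs hXi) (wordProd_mem_parabolic cs hUp) hw_eq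
    have hcore : cs.wordProd Pw = pw := by
      refine (bireduced_unique cs hIw hJw hpw_bired.1 hpw_bired.2 ?_).symm
      rw [← hdcw, ← hbc]
      exact hpw
    have hPwred : cs.IsReduced Pw := by
      have h1 := CoxeterSystem.IsReduced.drop hredw (j := Xi.length)
      rw [List.append_assoc, List.drop_left] at h1
      have h2 := CoxeterSystem.IsReduced.take h1 (j := Pw.length)
      rwa [List.take_left] at h2
    -- the key support lemma
    have hcrux : ∀ v' : W, BruhatLE cs v' w → IRed cs (leftDescents cs w) v' →
        JRed cs (rightDescents cs w) v' →
        ∀ c, (c ∈ leftDescents cs w ∨ c ∈ rightDescents cs w) →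
          ¬ BruhatLE cs (cs.simple c) v' := by
      intro v' hv'w hIv' hJv' c hcIJ hle
      obtain ⟨η, hηsub, hηred, hηπ⟩ := subword_of_le cs hv'w _ hredw hπw
      obtain ⟨η₁₂, η₃, rfl, hs₁₂, hs₃⟩ := List.sublist_append_iff.mp hηsub
      obtain ⟨η₁, η₂, rfl, hs₁, hs₂⟩ := List.sublist_append_iff.mp hs₁₂
      -- first part must be empty
      rcases η₁ with _ | ⟨a, η₁'⟩
      case cons =>
        have haI : a ∈ leftDescents cs w := hXi a (hs₁.subset (by simp))
        have hdesc : cs.length (cs.simple a * v') < cs.length v' := by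
          have he : cs.simple a * v' = cs.wordProd ((η₁' ++ η₂) ++ η₃) := by
            rw [← hηπ, show ((a :: η₁') ++ η₂) ++ η₃ = a :: ((η₁' ++ η₂) ++ η₃) from rfl,
              cs.wordProd_cons, ← mul_assoc, cs.simple_mul_simple_self, one_mul]
          have hlenv' : cs.length v' = (((a :: η₁') ++ η₂) ++ η₃).length := by
            rw [← hηπ, hηred]
          rw [he]
          calc cs.length (cs.wordProd ((η₁' ++ η₂) ++ η₃)) ≤ ((η₁' ++ η₂) ++ η₃).length :=
              cs.length_wordProd_le _
            _ < (((a :: η₁') ++ η₂) ++ η₃).length := by simp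
            _ = cs.length v' := hlenv'.symm
        have := hIv' a haI
        omega
      case nil =>
      -- last part must be empty
      rcases List.eq_nil_or_concat' η₃ with rfl | ⟨η₃', b, rfl⟩
      case inr =>
        have hbJ : b ∈ rightDescents cs w := hUp b (hs₃.subset (by simp))
        have hdesc : cs.length (v' * cs.simple b) < cs.length v' := by
          have he : v' * cs.simple b = cs.wordProd (([] ++ η₂) ++ η₃') := by
            rw [← hηπ, show ([] ++ η₂) ++ (η₃' ++ [b]) = ((([] ++ η₂) ++ η₃') ++ [b]) by simp,
              cs.wordProd_append, cs.wordProd_singleton, mul_assoc,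
              cs.simple_mul_simple_self, mul_one]
          have hlenv' : cs.length v' = (([] ++ η₂) ++ (η₃' ++ [b])).length := by
            rw [← hηπ, hηred]
          rw [he]
          calc cs.length (cs.wordProd (([] ++ η₂) ++ η₃')) ≤ (([] ++ η₂) ++ η₃').length :=
              cs.length_wordProd_le _
            _ < (([] ++ η₂) ++ (η₃' ++ [b])).length := by simp
            _ = cs.length v' := hlenv'.symm
        have := hJv' b hbJ
        omega
      case inl =>
      -- now v' is a product of letters of Pw
      simp only [List.nil_append, List.append_nil] at hηπ hηred
      obtain ⟨ζ, hζsub, hζred, hζπ⟩ := subword_of_le cs hle η₂ hηred hηπ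
      have hζlen : ζ.length = 1 := by
        have h1 : cs.length (cs.wordProd ζ) = ζ.length := hζred
        rw [hζπ, cs.length_simple] at h1
        omega
      obtain ⟨c₀, rfl⟩ := List.length_eq_one_iff.mp hζlen
      have hc₀mem : c₀ ∈ Pw := hs₂.subset (hζsub.subset (by simp))
      have hle_pw : BruhatLE cs (cs.simple c) pw := by
        rw [← hcore, ← show cs.wordProd [c₀] = cs.simple c from hζπ, cs.wordProd_singleton]
        exact simple_le_of_mem cs hPwred hc₀mem
      rcases hcIJ with hcI | hcJ
      · have hmem2 : c ∈ leftDescents cs w ∩ support cs pw := ⟨hcI, hle_pw⟩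
        rw [hsepL] at hmem2
        exact hmem2
      · have hmem2 : c ∈ rightDescents cs w ∩ support cs pw := ⟨hcJ, hle_pw⟩
        rw [hsepR] at hmem2
        exact hmem2
    -- structure decomposition of v
    obtain ⟨ξ, Pv, υ, hξ, hυ, hredv, hπv, hIv, hJv, hlev⟩ :=
      struct cs (leftDescents cs w) (rightDescents cs w) v
    have hv_eq : v = cs.wordProd ξ * cs.wordProd Pv * cs.wordProd υ := by
      rw [← hπv, cs.wordProd_append, cs.wordProd_append]
    have hdcv : doubleCoset cs (leftDescents cs w) (rightDescents cs w) v
        = doubleCoset cs (leftDescents cs w) (rightDescents cs w) (cs.wordProd Pv) :=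
      doubleCoset_eq cs (wordProd_mem_parabolic cs hξ) (wordProd_mem_parabolic cs hυ) hv_eq
    have hPvred : cs.IsReduced Pv := by
      have h1 := CoxeterSystem.IsReduced.drop hredv (j := ξ.length)
      rw [List.append_assoc, List.drop_left] at h1
      have h2 := CoxeterSystem.IsReduced.take h1 (j := Pv.length)
      rwa [List.take_left] at h2
    have hpv_m : cs.length pv = cs.length (cs.wordProd Pv) := by
      have h1 : cs.length (cs.wordProd Pv) ≤ cs.length pv := by
        refine bireduced_min cs hIv hJv pv ?_
        rw [← hdcv, ← hbc]
        exact hpv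
      have h2 : cs.length pv ≤ cs.length (cs.wordProd Pv) := by
        refine hpv_min _ ?_
        rw [hbc, hdcv]
        exact mem_doubleCoset_self cs _ _ _
      omega
    have hmw : BruhatLE cs (cs.wordProd Pv) w := le_trans' cs hlev hv
    -- exchange on the cover
    have hlt : cs.IsLeftInversion v t := by
      refine ⟨ht, ?_⟩
      have h0 : t * v = u := by rw [htu, ← mul_assoc, ht.mul_self, one_mul]
      rw [h0]
      omega
    obtain ⟨η, hsub, hlen, heq⟩ := strong_exchange_left cs hlt (ξ ++ Pv ++ υ) hπv
    have hu_eq : cs.wordProd η = u := by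
      rw [← heq, htu, ← mul_assoc, ht.mul_self, one_mul]
    obtain ⟨η₁₂, η₃, rfl, hs₁₂, hs₃⟩ := List.sublist_append_iff.mp hsub
    obtain ⟨η₁, η₂, rfl, hs₁, hs₂⟩ := List.sublist_append_iff.mp hs₁₂
    have hl₁ : η₁.length ≤ ξ.length := hs₁.length_le
    have hl₂ : η₂.length ≤ Pv.length := hs₂.length_le
    have hl₃ : η₃.length ≤ υ.length := hs₃.length_le
    have hlen' : η₁.length + η₂.length + η₃.length + 1 = ξ.length + Pv.length + υ.length := by
      have h0 := hlen
      simp only [List.length_append] at h0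
      omega
    have huprod : u = cs.wordProd η₁ * cs.wordProd η₂ * cs.wordProd η₃ := by
      rw [← hu_eq, cs.wordProd_append, cs.wordProd_append]
    rcases (show (η₁.length + 1 = ξ.length ∧ η₂.length = Pv.length ∧ η₃.length = υ.length) ∨
        (η₁.length = ξ.length ∧ η₂.length + 1 = Pv.length ∧ η₃.length = υ.length) ∨
        (η₁.length = ξ.length ∧ η₂.length = Pv.length ∧ η₃.length + 1 = υ.length) by omega)
      with ⟨he₁, he₂, he₃⟩ | ⟨he₁, he₂, he₃⟩ | ⟨he₁, he₂, he₃⟩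
    · -- erased in ξ : same double coset, contradiction
      exfalso
      rw [hs₂.eq_of_length he₂, hs₃.eq_of_length he₃] at huprod
      have e1 : doubleCoset cs (leftDescents cs w) (rightDescents cs w) u
          = doubleCoset cs (leftDescents cs w) (rightDescents cs w) (cs.wordProd Pv) :=
        doubleCoset_eq cs (wordProd_mem_parabolic cs fun a ha => hξ a (hs₁.subset ha))
          (wordProd_mem_parabolic cs hυ) huprod
      exact hc (by rw [hbc, hbc, e1, ← hdcv])
    · -- erased in the middle
      rw [hs₁.eq_of_length he₁, hs₃.eq_of_length he₃] at huprod
      -- length of the new middle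
      have hlv : cs.length v = ξ.length + Pv.length + υ.length := by
        have h0 := hredv
        rw [CoxeterSystem.IsReduced, hπv] at h0
        rw [h0]
        simp only [List.length_append]
      have hηred : cs.IsReduced ((η₁ ++ η₂) ++ η₃) := by
        rw [CoxeterSystem.IsReduced, hu_eq]
        simp only [List.length_append]
        omega
      have hmlen : cs.length (cs.wordProd Pv) = Pv.length := hPvred
      have hp'len : cs.length (cs.wordProd η₂) = η₂.length := by
        have hub : cs.length u ≤ cs.length (cs.wordProd ξ) + cs.length (cs.wordProd η₂)
            + cs.length (cs.wordProd υ) := by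
          rw [huprod]
          calc cs.length (cs.wordProd ξ * cs.wordProd η₂ * cs.wordProd υ)
              ≤ cs.length (cs.wordProd ξ * cs.wordProd η₂) + cs.length (cs.wordProd υ) :=
              cs.length_mul_le _ _
            _ ≤ cs.length (cs.wordProd ξ) + cs.length (cs.wordProd η₂)
                + cs.length (cs.wordProd υ) := by
                have := cs.length_mul_le (cs.wordProd ξ) (cs.wordProd η₂)
                omega
        have h2 : cs.length (cs.wordProd η₂) ≤ η₂.length := cs.length_wordProd_le _
        have h3 : cs.length (cs.wordProd ξ) ≤ ξ.length := cs.length_wordProd_le _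
        have h4 : cs.length (cs.wordProd υ) ≤ υ.length := cs.length_wordProd_le _
        have hlu : cs.length u = ξ.length + η₂.length + υ.length := by
          have := hηred
          rw [CoxeterSystem.IsReduced, hu_eq] at this
          rw [this, hs₁.eq_of_length he₁, hs₃.eq_of_length he₃]
          simp only [List.length_append]
        omega
      -- p' := wordProd η₂ is below the core of v
      obtain ⟨k, hk⟩ := sublist_eraseIdx hs₂ he₂
      have hp'le : BruhatLE cs (cs.wordProd η₂) (cs.wordProd Pv) := by
        rw [hk]
        exact erase_le cs hPvred k
      -- p' is bireduced
      have hp'I : IRed cs (leftDescents cs w) (cs.wordProd η₂) := by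
        intro i hi
        by_contra hcon
        push_neg at hcon
        exact hcrux (cs.wordProd Pv) hmw hIv hJv i (Or.inl hi)
          (le_trans' cs (simple_le_of_left_descent cs hcon) hp'le)
      have hp'J : JRed cs (rightDescents cs w) (cs.wordProd η₂) := by
        intro j hj
        by_contra hcon
        push_neg at hcon
        exact hcrux (cs.wordProd Pv) hmw hIv hJv j (Or.inr hj)
          (le_trans' cs (simple_le_of_right_descent cs hcon) hp'le)
      -- length of pu
      have e2 : doubleCoset cs (leftDescents cs w) (rightDescents cs w) u
          = doubleCoset cs (leftDescents cs w) (rightDescents cs w) (cs.wordProd η₂) :=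
        doubleCoset_eq cs (wordProd_mem_parabolic cs hξ) (wordProd_mem_parabolic cs hυ) huprod
      have hpu_p' : cs.length pu = cs.length (cs.wordProd η₂) := by
        have h1 : cs.length (cs.wordProd η₂) ≤ cs.length pu := by
          refine bireduced_min cs hp'I hp'J pu ?_
          rw [← e2, ← hbc]
          exact hpu
        have h2 : cs.length pu ≤ cs.length (cs.wordProd η₂) := by
          refine hpu_min _ ?_
          rw [hbc, e2]
          exact mem_doubleCoset_self cs _ _ _
        omega
      omega
    · -- erased in υ : same double coset, contradiction
      exfalso
      rw [hs₁.eq_of_length he₁, hs₂.eq_of_length he₂] at huprod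
      have e1 : doubleCoset cs (leftDescents cs w) (rightDescents cs w) u
          = doubleCoset cs (leftDescents cs w) (rightDescents cs w) (cs.wordProd Pv) :=
        doubleCoset_eq cs (wordProd_mem_parabolic cs hξ)
          (wordProd_mem_parabolic cs fun a ha => hυ a (hs₃.subset ha)) huprod
      exact hc (by rw [hbc, hbc, e1, ← hdcv])


/-- If `w` is separated and `u ⋖ v` is a Bruhat covering in `B(w)`, then either `u, v` lie in
the same Bruhat coset and `side_w(v) = side_w(u) + 1`, or they lie in different cosets and
`side_w(u) = side_w(v)`. -/
theorem separated_side_weakly_increasing (cs : CoxeterSystem M W) (w pw u v pu pv : W)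
    (hpw : pw ∈ bCoset cs w w)
    (hpw_min : ∀ x ∈ bCoset cs w w, cs.length pw ≤ cs.length x)
    (hsepL : leftDescents cs w ∩ support cs pw = ∅)
    (hsepR : rightDescents cs w ∩ support cs pw = ∅)
    (hu : BruhatLE cs u w) (hv : BruhatLE cs v w)
    (huv : BruhatLE cs u v) (hcov : cs.length v = cs.length u + 1)
    (hpu : pu ∈ bCoset cs w u) (hpu_min : ∀ x ∈ bCoset cs w u, cs.length pu ≤ cs.length x)
    (hpv : pv ∈ bCoset cs w v) (hpv_min : ∀ x ∈ bCoset cs w v, cs.length pv ≤ cs.length x) :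
    (bCoset cs w u = bCoset cs w v ∧
      cs.length v - cs.length pv = (cs.length u - cs.length pu) + 1) ∨
    (bCoset cs w u ≠ bCoset cs w v ∧
      cs.length u - cs.length pu = cs.length v - cs.length pv) := by
  exact separated_side_weakly_increasing' cs w pw u v pu pv hpw hpw_min hsepL hsepR hu hv
    huv hcov hpu hpu_min hpv hpv_min

end CoxeterBruhat
end
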